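/- arXiv:1012.5187 — 2 statements merged into one kernel-verified Lean document; each statement's English description precedes it below -/
import Mathlib

section
/- Let G be a 2-connected planar graph admitting a strong bar visibility representation. Then there is no pair of non-adjacent vertices u, v of G such that removing u and v separates G into four or more connected components. -/
set_option linter.unusedSectionVars false
set_option linter.unusedVariables false
set_option maxHeartbeats 1000000

open Classical
set_option linter.unusedSectionVars false

namespace BV

open SimpleGraph

variable {V : Type*} (G : SimpleGraph V) (y a b : V → ℝ) (u v : V)

def Bar (w : V) (x : ℝ) : Prop := a w ≤ x ∧ x ≤ b w

def Gd : SimpleGraph V where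
  Adj p q := G.Adj p q ∧ p ≠ u ∧ p ≠ v ∧ q ≠ u ∧ q ≠ v
  symm := by constructor; rintro p q ⟨h, h1, h2, h3, h4⟩; exact ⟨h.symm, h3, h4, h1, h2⟩
  loopless := by constructor; rintro p ⟨h, _⟩; exact G.irrefl h

def Clear (p q : V) (x : ℝ) : Prop :=
  a p ≤ x ∧ x ≤ b p ∧ a q ≤ x ∧ x ≤ b q ∧
    ∀ w : V, w ≠ p → w ≠ q →
      ¬ (a w ≤ x ∧ x ≤ b w ∧ min (y p) (y q) < y w ∧ y w < max (y p) (y q))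

variable {G y a b u v}

lemma gd_comm : Gd G u v = Gd G v u := by
  ext p q
  constructor <;> rintro ⟨h, h1, h2, h3, h4⟩ <;> exact ⟨h, h2, h1, h4, h3⟩

lemma support_ne {p q : V} (W : (Gd G u v).Walk p q) (hpu : p ≠ u) (hpv : p ≠ v) :
    ∀ w ∈ W.support, w ≠ u ∧ w ≠ v := by
  induction W with
  | nil => intro w hw; rw [SimpleGraph.Walk.support_nil] at hw; simp at hw; subst hw; exact ⟨hpu, hpv⟩
  | cons h W ih =>
    intro w hw
    rw [SimpleGraph.Walk.support_cons] at hw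
    rcases List.mem_cons.mp hw with rfl | hw
    · exact ⟨hpu, hpv⟩
    · exact ih h.2.2.2.1 h.2.2.2.2 w hw

lemma reach_of_support {p q : V} (W : (Gd G u v).Walk p q) {w : V} (hw : w ∈ W.support) :
    (Gd G u v).Reachable p w := ⟨W.takeUntil w hw⟩

section Rep

variable [Fintype V]
variable (hab : ∀ w, a w ≤ b w)
variable (hdisj : ∀ p q : V, p ≠ q → ∀ x : ℝ, a p ≤ x → x ≤ b p → a q ≤ x → x ≤ b q → y p ≠ y q)
variable (hadj : ∀ p q : V, p ≠ q → (G.Adj p q ↔ ∃ x, Clear y a b p q x))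

include hab hdisj hadj in
/-- two bars at a common abscissa with no `u` or `v` bar strictly between them
are in the same component of `G - {u,v}`. -/
lemma uniqrun (n : ℕ) :
    ∀ p q : V, p ≠ u → p ≠ v → q ≠ u → q ≠ v →
    ∀ x : ℝ, Bar a b p x → Bar a b q x →
    ¬ (Bar a b u x ∧ min (y p) (y q) < y u ∧ y u < max (y p) (y q)) →
    ¬ (Bar a b v x ∧ min (y p) (y q) < y v ∧ y v < max (y p) (y q)) →
    (Finset.univ.filter
      (fun w => Bar a b w x ∧ min (y p) (y q) < y w ∧ y w < max (y p) (y q))).card ≤ n →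
    (Gd G u v).Reachable p q := by
  induction n with
  | zero =>
    intro p q hpu hpv hqu hqv x hp hq hnu hnv hcard
    by_cases hpq : p = q
    · subst hpq; exact Reachable.refl p
    -- the "between" set is empty, so the sight is clear
    have hemp : ∀ w : V, ¬ (Bar a b w x ∧ min (y p) (y q) < y w ∧ y w < max (y p) (y q)) := by
      intro w hw
      have : w ∈ Finset.univ.filter
          (fun w => Bar a b w x ∧ min (y p) (y q) < y w ∧ y w < max (y p) (y q)) := by
        simp only [Finset.mem_filter, Finset.mem_univ, true_and]; exact hw
      have := Finset.card_pos.mpr ⟨w, this⟩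
      omega
    have hA : G.Adj p q := by
      refine (hadj p q hpq).2 ⟨x, hp.1, hp.2, hq.1, hq.2, ?_⟩
      intro w _ _ hw
      exact hemp w ⟨⟨hw.1, hw.2.1⟩, hw.2.2⟩
    exact SimpleGraph.Adj.reachable (show (Gd G u v).Adj p q from ⟨hA, hpu, hpv, hqu, hqv⟩)
  | succ n ih =>
    intro p q hpu hpv hqu hqv x hp hq hnu hnv hcard
    by_cases hpq : p = q
    · subst hpq; exact Reachable.refl p
    set S := Finset.univ.filter
      (fun w => Bar a b w x ∧ min (y p) (y q) < y w ∧ y w < max (y p) (y q)) with hS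
    by_cases hScard : S.card = 0
    · -- empty: clear sight, adjacent
      have hemp : ∀ w : V, ¬ (Bar a b w x ∧ min (y p) (y q) < y w ∧ y w < max (y p) (y q)) := by
        intro w hw
        have : w ∈ S := by
          simp only [hS, Finset.mem_filter, Finset.mem_univ, true_and]; exact hw
        have := Finset.card_pos.mpr ⟨w, this⟩
        omega
      have hA : G.Adj p q := by
        refine (hadj p q hpq).2 ⟨x, hp.1, hp.2, hq.1, hq.2, ?_⟩
        intro w _ _ hw
        exact hemp w ⟨⟨hw.1, hw.2.1⟩, hw.2.2⟩
      exact SimpleGraph.Adj.reachable (show (Gd G u v).Adj p q from ⟨hA, hpu, hpv, hqu, hqv⟩)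
    · obtain ⟨w, hwS⟩ := Finset.card_pos.mp (Nat.pos_of_ne_zero hScard)
      rw [hS, Finset.mem_filter] at hwS
      obtain ⟨-, hwbar, hw1, hw2⟩ := hwS
      have hwp : w ≠ p := by
        intro he; rw [he] at hw1 hw2
        rcases le_total (y p) (y q) with h | h
        · rw [min_eq_left h] at hw1; exact lt_irrefl _ hw1
        · rw [max_eq_left h] at hw2; exact lt_irrefl _ hw2
      have hwq : w ≠ q := by
        intro he; rw [he] at hw1 hw2
        rcases le_total (y p) (y q) with h | h
        · rw [max_eq_right h] at hw2; exact lt_irrefl _ hw2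
        · rw [min_eq_right h] at hw1; exact lt_irrefl _ hw1
      have hwu : w ≠ u := by intro he; rw [he] at hwbar hw1 hw2; exact hnu ⟨hwbar, hw1, hw2⟩
      have hwv : w ≠ v := by intro he; rw [he] at hwbar hw1 hw2; exact hnv ⟨hwbar, hw1, hw2⟩
      -- between sets for (p,w) and (w,q) are strict subsets of S not containing w
      have hsub : ∀ z : V, (min (y p) (y w) < y z ∧ y z < max (y p) (y w)) →
          (min (y p) (y q) < y z ∧ y z < max (y p) (y q)) := by
        intro z hz
        constructor
        · rcases min_lt_iff.mp hz.1 with h | h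
          · exact lt_of_le_of_lt (min_le_left _ _) h
          · exact lt_trans hw1 h
        · rcases lt_max_iff.mp hz.2 with h | h
          · exact lt_of_lt_of_le h (le_max_left _ _)
          · exact lt_trans h hw2
      have hsub' : ∀ z : V, (min (y w) (y q) < y z ∧ y z < max (y w) (y q)) →
          (min (y p) (y q) < y z ∧ y z < max (y p) (y q)) := by
        intro z hz
        constructor
        · rcases min_lt_iff.mp hz.1 with h | h
          · exact lt_trans hw1 h
          · exact lt_of_le_of_lt (min_le_right _ _) h
        · rcases lt_max_iff.mp hz.2 with h | h
          · exact lt_trans h hw2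
          · exact lt_of_lt_of_le h (le_max_right _ _)
      have hkey : ∀ (r s : V), r ≠ u → r ≠ v → s ≠ u → s ≠ v →
          Bar a b r x → Bar a b s x →
          (∀ z : V, (min (y r) (y s) < y z ∧ y z < max (y r) (y s)) →
            (min (y p) (y q) < y z ∧ y z < max (y p) (y q))) →
          ¬ (min (y r) (y s) < y w ∧ y w < max (y r) (y s)) →
          (Gd G u v).Reachable r s := by
        intro r s hru hrv hsu hsv hr hs hsubz hwnot
        refine ih r s hru hrv hsu hsv x hr hs ?_ ?_ ?_
        · intro hcon; exact hnu ⟨hcon.1, hsubz u ⟨hcon.2.1, hcon.2.2⟩⟩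
        · intro hcon; exact hnv ⟨hcon.1, hsubz v ⟨hcon.2.1, hcon.2.2⟩⟩
        · have hss : (Finset.univ.filter
              (fun z => Bar a b z x ∧ min (y r) (y s) < y z ∧ y z < max (y r) (y s))) ⊆ S.erase w := by
            intro z hz
            simp only [Finset.mem_filter, Finset.mem_univ, true_and] at hz
            rw [Finset.mem_erase]
            constructor
            · rintro rfl; exact hwnot ⟨hz.2.1, hz.2.2⟩
            · simp only [hS, Finset.mem_filter, Finset.mem_univ, true_and]
              exact ⟨hz.1, hsubz z ⟨hz.2.1, hz.2.2⟩⟩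
          have h1 := Finset.card_le_card hss
          have h2 : (S.erase w).card < S.card := by
            apply Finset.card_erase_lt_of_mem
            simp only [hS, Finset.mem_filter, Finset.mem_univ, true_and]
            exact ⟨hwbar, hw1, hw2⟩
          omega
      have hnotbetw1 : ¬ (min (y p) (y w) < y w ∧ y w < max (y p) (y w)) := by
        rintro ⟨h1, h2⟩
        rcases le_total (y p) (y w) with h | h
        · rw [max_eq_right h] at h2; exact lt_irrefl _ h2
        · rw [min_eq_right h] at h1; exact lt_irrefl _ h1
      have hnotbetw2 : ¬ (min (y w) (y q) < y w ∧ y w < max (y w) (y q)) := by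
        rintro ⟨h1, h2⟩
        rcases le_total (y w) (y q) with h | h
        · rw [min_eq_left h] at h1; exact lt_irrefl _ h1
        · rw [max_eq_left h] at h2; exact lt_irrefl _ h2
      exact (hkey p w hpu hpv hwu hwv hp hwbar hsub hnotbetw1).trans
        (hkey w q hwu hwv hqu hqv hwbar hq hsub' hnotbetw2)




include hadj in
/-- a chain of pairwise-intersecting bars covers the hull of endpoints' columns -/
lemma hull {p r : V} (W : (Gd G u v).Walk p r) :
    ∀ γ β x : ℝ, Bar a b p γ → Bar a b r β → min γ β ≤ x → x ≤ max γ β →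
    ∃ w ∈ W.support, Bar a b w x := by
  induction W with
  | @nil w =>
    intro γ β x hγ hβ h1 h2
    refine ⟨w, SimpleGraph.Walk.start_mem_support _, ?_, ?_⟩
    · calc a w ≤ min γ β := le_min hγ.1 hβ.1
        _ ≤ x := h1
    · calc x ≤ max γ β := h2
        _ ≤ b w := max_le hγ.2 hβ.2
  | @cons p p₁ r h W ih =>
    intro γ β x hγ hβ h1 h2
    obtain ⟨δ, hc⟩ := (hadj p p₁ h.1.ne).1 h.1
    have hpδ : Bar a b p δ := ⟨hc.1, hc.2.1⟩
    have hp₁δ : Bar a b p₁ δ := ⟨hc.2.2.1, hc.2.2.2.1⟩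
    by_cases hx : min γ δ ≤ x ∧ x ≤ max γ δ
    · refine ⟨p, SimpleGraph.Walk.start_mem_support _, ?_, ?_⟩
      · calc a p ≤ min γ δ := le_min hγ.1 hpδ.1
          _ ≤ x := hx.1
      · calc x ≤ max γ δ := hx.2
          _ ≤ b p := max_le hγ.2 hpδ.2
    · have hx' : min δ β ≤ x ∧ x ≤ max δ β := by
        rcases not_and_or.mp hx with hx | hx
        · push_neg at hx
          have hγx : γ > x := by
            rcases lt_min_iff.mp hx with ⟨h1', h2'⟩; exact h1'
          have hδx : δ > x := (lt_min_iff.mp hx).2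
          have hβx : β ≤ x := by
            rcases min_le_iff.mp h1 with h | h
            · linarith
            · exact h
          exact ⟨min_le_of_right_le hβx, le_max_of_le_left (le_of_lt hδx)⟩
        · push_neg at hx
          have hγx : x > γ := (max_lt_iff.mp hx).1
          have hδx : x > δ := (max_lt_iff.mp hx).2
          have hβx : x ≤ β := by
            rcases le_max_iff.mp h2 with h | h
            · linarith
            · exact h
          exact ⟨min_le_of_left_le (le_of_lt hδx), le_max_of_le_right hβx⟩
      obtain ⟨w, hw, hbar⟩ := ih δ β x hp₁δ hβ hx'.1 hx'.2
      exact ⟨w, by simp [hw], hbar⟩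



/-- split a walk at the first change of zone -/
lemma firstchange (ζ : V → Prop) {p z : V} (W : (Gd G u v).Walk p z) :
    (∀ w ∈ W.support, (ζ w ↔ ζ p)) ∨
    ∃ (r r' : V) (W₁ : (Gd G u v).Walk p r) (W₂ : (Gd G u v).Walk r' z),
      (∀ w ∈ W₁.support, (ζ w ↔ ζ p)) ∧ ¬ (ζ r' ↔ ζ p) ∧ (Gd G u v).Adj r r' ∧
      W₂.length < W.length := by
  induction W with
  | nil => left; intro w hw; simp at hw; subst hw; exact Iff.rfl
  | @cons p p₁ z h W ih =>
    by_cases hζ : ζ p₁ ↔ ζ p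
    · rcases ih with hall | ⟨r, r', W₁, W₂, h1, h2, h3, h4⟩
      · left
        intro w hw
        rw [SimpleGraph.Walk.support_cons] at hw
        rcases List.mem_cons.mp hw with rfl | hw
        · exact Iff.rfl
        · exact (hall w hw).trans hζ
      · right
        refine ⟨r, r', SimpleGraph.Walk.cons h W₁, W₂, ?_, ?_, h3, ?_⟩
        · intro w hw
          rw [SimpleGraph.Walk.support_cons] at hw
          rcases List.mem_cons.mp hw with rfl | hw
          · exact Iff.rfl
          · exact (h1 w hw).trans hζ
        · intro hc; exact h2 (hc.trans hζ.symm)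
        · rw [SimpleGraph.Walk.length_cons]; omega
    · right
      exact ⟨p, p₁, SimpleGraph.Walk.nil, W, by intro w hw; simp at hw; subst hw; exact Iff.rfl,
        hζ, h, by rw [SimpleGraph.Walk.length_cons]; omega⟩

include hdisj hadj in
/-- a zone change across the level of `u` happens outside the x-interval of `u` -/
lemma transu {p q : V} (hA : G.Adj p q) (hpu : p ≠ u) (hpv : p ≠ v) (hqu : q ≠ u) (hqv : q ≠ v)
    (hzp : y p < y u) (hzq : y u ≤ y q) :
    ∃ x, Bar a b p x ∧ Bar a b q x ∧ ¬ Bar a b u x := by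
  obtain ⟨x, hc⟩ := (hadj p q hA.ne).1 hA
  refine ⟨x, ⟨hc.1, hc.2.1⟩, ⟨hc.2.2.1, hc.2.2.2.1⟩, ?_⟩
  intro hbu
  rcases eq_or_lt_of_le hzq with he | hlt
  · exact hdisj q u hqu x hc.2.2.1 hc.2.2.2.1 hbu.1 hbu.2 he.symm
  · refine hc.2.2.2.2 u (Ne.symm hpu) (Ne.symm hqu) ⟨hbu.1, hbu.2, ?_, ?_⟩
    · exact lt_of_le_of_lt (min_le_left _ _) hzp
    · exact lt_of_lt_of_le hlt (le_max_right _ _)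

include hdisj hadj in
/-- a zone change across the level of `v` happens outside the x-interval of `v` -/
lemma transv {p q : V} (hA : G.Adj p q) (hpu : p ≠ u) (hpv : p ≠ v) (hqu : q ≠ u) (hqv : q ≠ v)
    (hzp : y p ≤ y v) (hzq : y v < y q) :
    ∃ x, Bar a b p x ∧ Bar a b q x ∧ ¬ Bar a b v x := by
  obtain ⟨x, hc⟩ := (hadj p q hA.ne).1 hA
  refine ⟨x, ⟨hc.1, hc.2.1⟩, ⟨hc.2.2.1, hc.2.2.2.1⟩, ?_⟩
  intro hbv
  rcases eq_or_lt_of_le hzp with he | hlt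
  · exact hdisj p v hpv x hc.1 hc.2.1 hbv.1 hbv.2 he
  · refine hc.2.2.2.2 v (Ne.symm hpv) (Ne.symm hqv) ⟨hbv.1, hbv.2, ?_, ?_⟩
    · exact lt_of_le_of_lt (min_le_left _ _) hlt
    · exact lt_of_lt_of_le hzq (le_max_right _ _)

section Patterns

variable (hne : u ≠ v) (hyuv : y u < y v)
variable (hst : max (a u) (a v) ≤ min (b u) (b v))

include hab hdisj hadj hyuv hst in
lemma P3W (hA : a u ≤ a v) (hB : b u ≤ b v)
    {z : V} {ξ : ℝ}
    (hzbar : Bar a b z ξ) (hubar : Bar a b u ξ)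
    (hzone : y z < y u ∨ (y u < y z ∧ ¬ Bar a b v ξ)) :
    ∀ n : ℕ, ∀ p : V, p ≠ u → p ≠ v → ∀ W : (Gd G u v).Walk p z, W.length ≤ n →
    ∀ τ : ℝ, Bar a b p τ → b u < τ →
    (∃ m, (Gd G u v).Reachable p m ∧ m ≠ u ∧ m ≠ v ∧ ¬ (y m < y u) ∧ Bar a b m (a v)) ∨
    (∃ m, (Gd G u v).Reachable p m ∧ m ≠ u ∧ m ≠ v ∧ y m < y u ∧ Bar a b m (b u)) := by
  have hav_bu : a v ≤ b u := le_trans (le_trans (le_max_right (a u) (a v)) hst) (min_le_left _ _)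
  intro n
  induction n using Nat.strong_induction_on with
  | _ n ih =>
  intro p hpu hpv W hlen τ hpτ hτ
  rcases firstchange (fun w => y w < y u) W with hall | ⟨r, r', W₁, W₂, h1, h2, h3, h4⟩
  · have hzz := hall z W.end_mem_support
    rcases hzone with hz1 | ⟨hz1, hz2⟩
    · obtain ⟨m, hm, hbar⟩ := hull hadj W τ ξ (b u) hpτ hzbar
        (min_le_of_right_le hubar.2) (le_max_of_le_left hτ.le)
      exact Or.inr ⟨m, reach_of_support W hm, (support_ne W hpu hpv m hm).1,
        (support_ne W hpu hpv m hm).2, (hall m hm).mpr (hzz.mp hz1), hbar⟩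
    · have hξv : ξ < a v := by
        by_contra hge; push_neg at hge
        exact hz2 ⟨hge, le_trans hubar.2 hB⟩
      obtain ⟨m, hm, hbar⟩ := hull hadj W τ ξ (a v) hpτ hzbar
        (min_le_of_right_le hξv.le) (le_max_of_le_left (by linarith))
      refine Or.inl ⟨m, reach_of_support W hm, (support_ne W hpu hpv m hm).1,
        (support_ne W hpu hpv m hm).2, ?_, hbar⟩
      exact fun hc => (lt_asymm hz1) (hzz.mpr ((hall m hm).mp hc))
  · have hru := h3.2.1
    have hrv := h3.2.2.1
    have hr'u := h3.2.2.2.1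
    have hr'v := h3.2.2.2.2
    have hriff := h1 r W₁.end_mem_support
    have hpr' : (Gd G u v).Reachable p r' :=
      Reachable.trans ⟨W₁⟩ h3.reachable
    by_cases hrz : y r < y u
    · have hr'z : ¬ (y r' < y u) := fun hc => h2 (iff_of_true hc (hriff.mp hrz))
      obtain ⟨e, hre, hr'e, hnbu⟩ :=
        transu hdisj hadj h3.1 hru hrv hr'u hr'v hrz (le_of_not_gt hr'z)
      rcases not_and_or.mp hnbu with he | he
      · push_neg at he
        obtain ⟨m, hm, hbar⟩ := hull hadj W₁ τ e (b u) hpτ hre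
          (min_le_of_right_le (by linarith [hab u])) (le_max_of_le_left hτ.le)
        exact Or.inr ⟨m, reach_of_support W₁ hm, (support_ne W₁ hpu hpv m hm).1,
          (support_ne W₁ hpu hpv m hm).2, (h1 m hm).mpr (hriff.mp hrz), hbar⟩
      · push_neg at he
        rcases ih W₂.length (lt_of_lt_of_le h4 hlen) r' hr'u hr'v W₂ le_rfl e hr'e he with
          ⟨m, hm1, h5⟩ | ⟨m, hm1, h5⟩
        · exact Or.inl ⟨m, hpr'.trans hm1, h5⟩
        · exact Or.inr ⟨m, hpr'.trans hm1, h5⟩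
    · have hr'z : y r' < y u := by
        by_contra hc
        exact h2 (iff_of_false hc (fun hp => hrz (hriff.mpr hp)))
      obtain ⟨e, hr'e, hre, hnbu⟩ :=
        transu hdisj hadj h3.1.symm hr'u hr'v hru hrv hr'z (le_of_not_gt hrz)
      rcases not_and_or.mp hnbu with he | he
      · push_neg at he
        obtain ⟨m, hm, hbar⟩ := hull hadj W₁ τ e (a v) hpτ hre
          (min_le_of_right_le (by linarith)) (le_max_of_le_left (by linarith))
        refine Or.inl ⟨m, reach_of_support W₁ hm, (support_ne W₁ hpu hpv m hm).1,
          (support_ne W₁ hpu hpv m hm).2, ?_, hbar⟩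
        exact fun hc => hrz (hriff.mpr ((h1 m hm).mp hc))
      · push_neg at he
        rcases ih W₂.length (lt_of_lt_of_le h4 hlen) r' hr'u hr'v W₂ le_rfl e hr'e he with
          ⟨m, hm1, h5⟩ | ⟨m, hm1, h5⟩
        · exact Or.inl ⟨m, hpr'.trans hm1, h5⟩
        · exact Or.inr ⟨m, hpr'.trans hm1, h5⟩

include hab hdisj hadj hne hyuv hst in
lemma P3S (hA : a u ≤ a v) (hB : b u ≤ b v)
    {z w' : V} {ξ β : ℝ}
    (hw'u : w' ≠ u) (hw'v : w' ≠ v)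
    (hzbar : Bar a b z ξ) (hubar : Bar a b u ξ)
    (hzone : y z < y u ∨ (y u < y z ∧ ¬ Bar a b v ξ))
    (hwbar : Bar a b w' β) (hvbar : Bar a b v β)
    (hwzone : y v < y w' ∨ (y w' < y v ∧ ¬ Bar a b u β))
    (W : (Gd G u v).Walk w' z) :
    (∃ m, (Gd G u v).Reachable w' m ∧ m ≠ u ∧ m ≠ v ∧ ¬ (y m < y u) ∧ Bar a b m (a v)) ∨
    (∃ m, (Gd G u v).Reachable w' m ∧ m ≠ u ∧ m ≠ v ∧ y m < y u ∧ Bar a b m (b u)) := by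
  have hav_bu : a v ≤ b u := le_trans (le_trans (le_max_right (a u) (a v)) hst) (min_le_left _ _)
  rcases hwzone with hw1 | ⟨hw1, hw2⟩
  · -- v-access from above
    rcases firstchange (fun w => y w < y u) W with hall | ⟨r, r', W₁, W₂, h1, h2, h3, h4⟩
    · have hzz := hall z W.end_mem_support
      rcases hzone with hz1 | ⟨hz1, hz2⟩
      · exact absurd (hzz.mp hz1) (by intro h; linarith)
      · have hξv : ξ < a v := by
          by_contra hge; push_neg at hge
          exact hz2 ⟨hge, le_trans hubar.2 hB⟩
        obtain ⟨m, hm, hbar⟩ := hull hadj W β ξ (a v) hwbar hzbar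
          (min_le_of_right_le hξv.le) (le_max_of_le_left hvbar.1)
        refine Or.inl ⟨m, reach_of_support W hm, (support_ne W hw'u hw'v m hm).1,
          (support_ne W hw'u hw'v m hm).2, ?_, hbar⟩
        intro hc
        have := (hall m hm).mp hc
        linarith
    · have hru := h3.2.1
      have hrv := h3.2.2.1
      have hr'u := h3.2.2.2.1
      have hr'v := h3.2.2.2.2
      have hriff := h1 r W₁.end_mem_support
      have hpr' : (Gd G u v).Reachable w' r' := Reachable.trans ⟨W₁⟩ h3.reachable
      have hrz : ¬ (y r < y u) := by
        intro hc
        have := hriff.mp hc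
        linarith
      have hr'z : y r' < y u := by
        by_contra hc
        exact h2 (iff_of_false hc (fun hp => by linarith))
      obtain ⟨e, hr'e, hre, hnbu⟩ :=
        transu hdisj hadj h3.1.symm hr'u hr'v hru hrv hr'z (le_of_not_gt hrz)
      rcases not_and_or.mp hnbu with he | he
      · push_neg at he
        obtain ⟨m, hm, hbar⟩ := hull hadj W₁ β e (a v) hwbar hre
          (min_le_of_right_le (by linarith)) (le_max_of_le_left hvbar.1)
        refine Or.inl ⟨m, reach_of_support W₁ hm, (support_ne W₁ hw'u hw'v m hm).1,
          (support_ne W₁ hw'u hw'v m hm).2, ?_, hbar⟩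
        intro hc
        have := (h1 m hm).mp hc
        linarith
      · push_neg at he
        rcases P3W hab hdisj hadj hyuv hst hA hB hzbar hubar hzone W₂.length r' hr'u hr'v W₂
          le_rfl e hr'e he with ⟨m, hm1, h5⟩ | ⟨m, hm1, h5⟩
        · exact Or.inl ⟨m, hpr'.trans hm1, h5⟩
        · exact Or.inr ⟨m, hpr'.trans hm1, h5⟩
  · -- v-access from below through a window : β > b u
    have hβ : b u < β := by
      by_contra hc; push_neg at hc
      exact hw2 ⟨le_trans hA hvbar.1, hc⟩
    exact P3W hab hdisj hadj hyuv hst hA hB hzbar hubar hzone W.length w' hw'u hw'v W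
      le_rfl β hwbar hβ

include hab hdisj hadj hne hyuv hst in
lemma P1S (hA : a u ≤ a v) (hB' : b v ≤ b u)
    {z w' : V} {ξ β : ℝ}
    (hw'u : w' ≠ u) (hw'v : w' ≠ v)
    (hzbar : Bar a b z ξ) (hubar : Bar a b u ξ)
    (hzone : y z < y u ∨ (y u < y z ∧ ¬ Bar a b v ξ))
    (hwbar : Bar a b w' β) (hvbar : Bar a b v β)
    (hwzone : y v < y w' ∨ (y w' < y v ∧ ¬ Bar a b u β))
    (W : (Gd G u v).Walk w' z) :
    (∃ m, (Gd G u v).Reachable w' m ∧ m ≠ u ∧ m ≠ v ∧ ¬ (y m < y u) ∧ Bar a b m (a v)) ∨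
    (∃ m, (Gd G u v).Reachable w' m ∧ m ≠ u ∧ m ≠ v ∧ ¬ (y m < y u) ∧ Bar a b m (b v)) := by
  rcases hwzone with hw1 | ⟨hw1, hw2⟩
  swap
  · exact absurd ⟨le_trans hA hvbar.1, le_trans hvbar.2 hB'⟩ hw2
  rcases firstchange (fun w => y w < y u) W with hall | ⟨r, r', W₁, W₂, h1, h2, h3, h4⟩
  · have hzz := hall z W.end_mem_support
    rcases hzone with hz1 | ⟨hz1, hz2⟩
    · exact absurd (hzz.mp hz1) (by intro h; linarith)
    · have hnotζ : ∀ m ∈ W.support, ¬ (y m < y u) := by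
        intro m hm hc
        have := (hall m hm).mp hc
        linarith
      rcases not_and_or.mp hz2 with hξv | hξv
      · push_neg at hξv
        obtain ⟨m, hm, hbar⟩ := hull hadj W β ξ (a v) hwbar hzbar
          (min_le_of_right_le hξv.le) (le_max_of_le_left hvbar.1)
        exact Or.inl ⟨m, reach_of_support W hm, (support_ne W hw'u hw'v m hm).1,
          (support_ne W hw'u hw'v m hm).2, hnotζ m hm, hbar⟩
      · push_neg at hξv
        obtain ⟨m, hm, hbar⟩ := hull hadj W β ξ (b v) hwbar hzbar
          (min_le_of_left_le hvbar.2) (le_max_of_le_right hξv.le)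
        exact Or.inr ⟨m, reach_of_support W hm, (support_ne W hw'u hw'v m hm).1,
          (support_ne W hw'u hw'v m hm).2, hnotζ m hm, hbar⟩
  · have hru := h3.2.1
    have hrv := h3.2.2.1
    have hr'u := h3.2.2.2.1
    have hr'v := h3.2.2.2.2
    have hriff := h1 r W₁.end_mem_support
    have hrz : ¬ (y r < y u) := by
      intro hc
      have := hriff.mp hc
      linarith
    have hr'z : y r' < y u := by
      by_contra hc
      exact h2 (iff_of_false hc (fun hp => by linarith))
    have hnotζ : ∀ m ∈ W₁.support, ¬ (y m < y u) := by
      intro m hm hc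
      have := (h1 m hm).mp hc
      linarith
    obtain ⟨e, hr'e, hre, hnbu⟩ :=
      transu hdisj hadj h3.1.symm hr'u hr'v hru hrv hr'z (le_of_not_gt hrz)
    rcases not_and_or.mp hnbu with he | he
    · push_neg at he
      obtain ⟨m, hm, hbar⟩ := hull hadj W₁ β e (a v) hwbar hre
        (min_le_of_right_le (by linarith)) (le_max_of_le_left hvbar.1)
      exact Or.inl ⟨m, reach_of_support W₁ hm, (support_ne W₁ hw'u hw'v m hm).1,
        (support_ne W₁ hw'u hw'v m hm).2, hnotζ m hm, hbar⟩
    · push_neg at he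
      obtain ⟨m, hm, hbar⟩ := hull hadj W₁ β e (b v) hwbar hre
        (min_le_of_left_le hvbar.2) (le_max_of_le_right (by linarith [hab u]))
      exact Or.inr ⟨m, reach_of_support W₁ hm, (support_ne W₁ hw'u hw'v m hm).1,
        (support_ne W₁ hw'u hw'v m hm).2, hnotζ m hm, hbar⟩

include hab hdisj hadj hne hyuv hst in
lemma P2S (hA' : a v ≤ a u) (hB : b u ≤ b v)
    {z w' : V} {ξ β : ℝ}
    (hzu : z ≠ u) (hzv : z ≠ v)
    (hzbar : Bar a b z ξ) (hubar : Bar a b u ξ)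
    (hzone : y z < y u ∨ (y u < y z ∧ ¬ Bar a b v ξ))
    (hwbar : Bar a b w' β) (hvbar : Bar a b v β)
    (hwzone : y v < y w' ∨ (y w' < y v ∧ ¬ Bar a b u β))
    (W : (Gd G u v).Walk z w') :
    (∃ m, (Gd G u v).Reachable z m ∧ m ≠ u ∧ m ≠ v ∧ ¬ (y v < y m) ∧ Bar a b m (a u)) ∨
    (∃ m, (Gd G u v).Reachable z m ∧ m ≠ u ∧ m ≠ v ∧ ¬ (y v < y m) ∧ Bar a b m (b u)) := by
  -- in this pattern the u-access must be from below
  have hz1 : y z < y u := by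
    rcases hzone with hz1 | ⟨hz1, hz2⟩
    · exact hz1
    · exact absurd ⟨le_trans hA' hubar.1, le_trans hubar.2 hB⟩ hz2
  rcases firstchange (fun w => y v < y w) W with hall | ⟨r, r', W₁, W₂, h1, h2, h3, h4⟩
  · have hzz := hall w' W.end_mem_support
    rcases hwzone with hw1 | ⟨hw1, hw2⟩
    · exact absurd (hzz.mp hw1) (by intro h; linarith)
    · have hnotζ : ∀ m ∈ W.support, ¬ (y v < y m) := by
        intro m hm hc
        have := (hall m hm).mp hc
        linarith
      rcases not_and_or.mp hw2 with hβ | hβ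
      · push_neg at hβ
        obtain ⟨m, hm, hbar⟩ := hull hadj W ξ β (a u) hzbar hwbar
          (min_le_of_right_le hβ.le) (le_max_of_le_left hubar.1)
        exact Or.inl ⟨m, reach_of_support W hm, (support_ne W hzu hzv m hm).1,
          (support_ne W hzu hzv m hm).2, hnotζ m hm, hbar⟩
      · push_neg at hβ
        obtain ⟨m, hm, hbar⟩ := hull hadj W ξ β (b u) hzbar hwbar
          (min_le_of_left_le hubar.2) (le_max_of_le_right hβ.le)
        exact Or.inr ⟨m, reach_of_support W hm, (support_ne W hzu hzv m hm).1,
          (support_ne W hzu hzv m hm).2, hnotζ m hm, hbar⟩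
  · have hru := h3.2.1
    have hrv := h3.2.2.1
    have hr'u := h3.2.2.2.1
    have hr'v := h3.2.2.2.2
    have hriff := h1 r W₁.end_mem_support
    have hrz : ¬ (y v < y r) := by
      intro hc
      have := hriff.mp hc
      linarith
    have hr'z : y v < y r' := by
      by_contra hc
      exact h2 (iff_of_false hc (fun hp => by linarith))
    have hnotζ : ∀ m ∈ W₁.support, ¬ (y v < y m) := by
      intro m hm hc
      have := (h1 m hm).mp hc
      linarith
    obtain ⟨e, hre, hr'e, hnbv⟩ :=
      transv hdisj hadj h3.1 hru hrv hr'u hr'v (le_of_not_gt hrz) hr'z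
    rcases not_and_or.mp hnbv with he | he
    · push_neg at he
      obtain ⟨m, hm, hbar⟩ := hull hadj W₁ ξ e (a u) hzbar hre
        (min_le_of_right_le (by linarith)) (le_max_of_le_left hubar.1)
      exact Or.inl ⟨m, reach_of_support W₁ hm, (support_ne W₁ hzu hzv m hm).1,
        (support_ne W₁ hzu hzv m hm).2, hnotζ m hm, hbar⟩
    · push_neg at he
      obtain ⟨m, hm, hbar⟩ := hull hadj W₁ ξ e (b u) hzbar hre
        (min_le_of_left_le hubar.2) (le_max_of_le_right (by linarith))
      exact Or.inr ⟨m, reach_of_support W₁ hm, (support_ne W₁ hzu hzv m hm).1,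
        (support_ne W₁ hzu hzv m hm).2, hnotζ m hm, hbar⟩

include hab hdisj hadj hyuv hst in
lemma P4W (hA' : a v ≤ a u) (hB' : b v ≤ b u)
    {z : V} {ξ : ℝ}
    (hzbar : Bar a b z ξ) (hubar : Bar a b u ξ)
    (hzone : y z < y u ∨ (y u < y z ∧ ¬ Bar a b v ξ)) :
    ∀ n : ℕ, ∀ p : V, p ≠ u → p ≠ v → ∀ W : (Gd G u v).Walk p z, W.length ≤ n →
    ∀ τ : ℝ, Bar a b p τ → τ < a u →
    (∃ m, (Gd G u v).Reachable p m ∧ m ≠ u ∧ m ≠ v ∧ y m < y u ∧ Bar a b m (a u)) ∨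
    (∃ m, (Gd G u v).Reachable p m ∧ m ≠ u ∧ m ≠ v ∧ ¬ (y m < y u) ∧ Bar a b m (b v)) := by
  have hau_bv : a u ≤ b v := le_trans (le_trans (le_max_left (a u) (a v)) hst) (min_le_right _ _)
  intro n
  induction n using Nat.strong_induction_on with
  | _ n ih =>
  intro p hpu hpv W hlen τ hpτ hτ
  rcases firstchange (fun w => y w < y u) W with hall | ⟨r, r', W₁, W₂, h1, h2, h3, h4⟩
  · have hzz := hall z W.end_mem_support
    rcases hzone with hz1 | ⟨hz1, hz2⟩
    · obtain ⟨m, hm, hbar⟩ := hull hadj W τ ξ (a u) hpτ hzbar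
        (min_le_of_left_le hτ.le) (le_max_of_le_right hubar.1)
      exact Or.inl ⟨m, reach_of_support W hm, (support_ne W hpu hpv m hm).1,
        (support_ne W hpu hpv m hm).2, (hall m hm).mpr (hzz.mp hz1), hbar⟩
    · have hξv : b v < ξ := by
        rcases not_and_or.mp hz2 with h | h
        · push_neg at h; linarith [le_trans hA' hubar.1]
        · push_neg at h; exact h
      obtain ⟨m, hm, hbar⟩ := hull hadj W τ ξ (b v) hpτ hzbar
        (min_le_of_left_le (by linarith)) (le_max_of_le_right hξv.le)
      refine Or.inr ⟨m, reach_of_support W hm, (support_ne W hpu hpv m hm).1,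
        (support_ne W hpu hpv m hm).2, ?_, hbar⟩
      exact fun hc => (lt_asymm hz1) (hzz.mpr ((hall m hm).mp hc))
  · have hru := h3.2.1
    have hrv := h3.2.2.1
    have hr'u := h3.2.2.2.1
    have hr'v := h3.2.2.2.2
    have hriff := h1 r W₁.end_mem_support
    have hpr' : (Gd G u v).Reachable p r' := Reachable.trans ⟨W₁⟩ h3.reachable
    by_cases hrz : y r < y u
    · have hr'z : ¬ (y r' < y u) := fun hc => h2 (iff_of_true hc (hriff.mp hrz))
      obtain ⟨e, hre, hr'e, hnbu⟩ :=
        transu hdisj hadj h3.1 hru hrv hr'u hr'v hrz (le_of_not_gt hr'z)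
      rcases not_and_or.mp hnbu with he | he
      · push_neg at he
        rcases ih W₂.length (lt_of_lt_of_le h4 hlen) r' hr'u hr'v W₂ le_rfl e hr'e he with
          ⟨m, hm1, h5⟩ | ⟨m, hm1, h5⟩
        · exact Or.inl ⟨m, hpr'.trans hm1, h5⟩
        · exact Or.inr ⟨m, hpr'.trans hm1, h5⟩
      · push_neg at he
        obtain ⟨m, hm, hbar⟩ := hull hadj W₁ τ e (a u) hpτ hre
          (min_le_of_left_le hτ.le) (le_max_of_le_right (by linarith [hab u]))
        exact Or.inl ⟨m, reach_of_support W₁ hm, (support_ne W₁ hpu hpv m hm).1,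
          (support_ne W₁ hpu hpv m hm).2, (h1 m hm).mpr (hriff.mp hrz), hbar⟩
    · have hr'z : y r' < y u := by
        by_contra hc
        exact h2 (iff_of_false hc (fun hp => hrz (hriff.mpr hp)))
      obtain ⟨e, hr'e, hre, hnbu⟩ :=
        transu hdisj hadj h3.1.symm hr'u hr'v hru hrv hr'z (le_of_not_gt hrz)
      rcases not_and_or.mp hnbu with he | he
      · push_neg at he
        rcases ih W₂.length (lt_of_lt_of_le h4 hlen) r' hr'u hr'v W₂ le_rfl e hr'e he with
          ⟨m, hm1, h5⟩ | ⟨m, hm1, h5⟩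
        · exact Or.inl ⟨m, hpr'.trans hm1, h5⟩
        · exact Or.inr ⟨m, hpr'.trans hm1, h5⟩
      · push_neg at he
        obtain ⟨m, hm, hbar⟩ := hull hadj W₁ τ e (b v) hpτ hre
          (min_le_of_left_le (by linarith)) (le_max_of_le_right (by linarith [hab u]))
        refine Or.inr ⟨m, reach_of_support W₁ hm, (support_ne W₁ hpu hpv m hm).1,
          (support_ne W₁ hpu hpv m hm).2, ?_, hbar⟩
        exact fun hc => hrz (hriff.mpr ((h1 m hm).mp hc))

include hab hdisj hadj hne hyuv hst in
lemma P4S (hA' : a v ≤ a u) (hB' : b v ≤ b u)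
    {z w' : V} {ξ β : ℝ}
    (hw'u : w' ≠ u) (hw'v : w' ≠ v)
    (hzbar : Bar a b z ξ) (hubar : Bar a b u ξ)
    (hzone : y z < y u ∨ (y u < y z ∧ ¬ Bar a b v ξ))
    (hwbar : Bar a b w' β) (hvbar : Bar a b v β)
    (hwzone : y v < y w' ∨ (y w' < y v ∧ ¬ Bar a b u β))
    (W : (Gd G u v).Walk w' z) :
    (∃ m, (Gd G u v).Reachable w' m ∧ m ≠ u ∧ m ≠ v ∧ y m < y u ∧ Bar a b m (a u)) ∨
    (∃ m, (Gd G u v).Reachable w' m ∧ m ≠ u ∧ m ≠ v ∧ ¬ (y m < y u) ∧ Bar a b m (b v)) := by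
  rcases hwzone with hw1 | ⟨hw1, hw2⟩
  · rcases firstchange (fun w => y w < y u) W with hall | ⟨r, r', W₁, W₂, h1, h2, h3, h4⟩
    · have hzz := hall z W.end_mem_support
      rcases hzone with hz1 | ⟨hz1, hz2⟩
      · exact absurd (hzz.mp hz1) (by intro h; linarith)
      · have hξv : b v < ξ := by
          rcases not_and_or.mp hz2 with h | h
          · push_neg at h; linarith [le_trans hA' hubar.1]
          · push_neg at h; exact h
        obtain ⟨m, hm, hbar⟩ := hull hadj W β ξ (b v) hwbar hzbar
          (min_le_of_left_le hvbar.2) (le_max_of_le_right hξv.le)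
        refine Or.inr ⟨m, reach_of_support W hm, (support_ne W hw'u hw'v m hm).1,
          (support_ne W hw'u hw'v m hm).2, ?_, hbar⟩
        intro hc
        have := (hall m hm).mp hc
        linarith
    · have hru := h3.2.1
      have hrv := h3.2.2.1
      have hr'u := h3.2.2.2.1
      have hr'v := h3.2.2.2.2
      have hriff := h1 r W₁.end_mem_support
      have hpr' : (Gd G u v).Reachable w' r' := Reachable.trans ⟨W₁⟩ h3.reachable
      have hrz : ¬ (y r < y u) := by
        intro hc
        have := hriff.mp hc
        linarith
      have hr'z : y r' < y u := by
        by_contra hc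
        exact h2 (iff_of_false hc (fun hp => by linarith))
      obtain ⟨e, hr'e, hre, hnbu⟩ :=
        transu hdisj hadj h3.1.symm hr'u hr'v hru hrv hr'z (le_of_not_gt hrz)
      rcases not_and_or.mp hnbu with he | he
      · push_neg at he
        rcases P4W hab hdisj hadj hyuv hst hA' hB' hzbar hubar hzone W₂.length r' hr'u hr'v W₂
          le_rfl e hr'e he with ⟨m, hm1, h5⟩ | ⟨m, hm1, h5⟩
        · exact Or.inl ⟨m, hpr'.trans hm1, h5⟩
        · exact Or.inr ⟨m, hpr'.trans hm1, h5⟩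
      · push_neg at he
        obtain ⟨m, hm, hbar⟩ := hull hadj W₁ β e (b v) hwbar hre
          (min_le_of_left_le hvbar.2) (le_max_of_le_right (by linarith [hab u]))
        refine Or.inr ⟨m, reach_of_support W₁ hm, (support_ne W₁ hw'u hw'v m hm).1,
          (support_ne W₁ hw'u hw'v m hm).2, ?_, hbar⟩
        intro hc
        have := (h1 m hm).mp hc
        linarith
  · have hβ : β < a u := by
      rcases not_and_or.mp hw2 with h | h
      · push_neg at h; exact h
      · push_neg at h; linarith [le_trans hvbar.2 hB']
    exact P4W hab hdisj hadj hyuv hst hA' hB' hzbar hubar hzone W.length w' hw'u hw'v W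
      le_rfl β hwbar hβ

include hab hdisj hadj hyuv in
lemma clash {d d' m m' : V} {x₀ : ℝ} (hnr : ¬ (Gd G u v).Reachable d d')
    (h1 : (Gd G u v).Reachable d m) (h2 : (Gd G u v).Reachable d' m')
    (hmu : m ≠ u) (hmv : m ≠ v) (hm'u : m' ≠ u) (hm'v : m' ≠ v)
    (hb : Bar a b m x₀) (hb' : Bar a b m' x₀)
    (hy : (y v < y m ∧ y v < y m') ∨ (y m < y u ∧ y m' < y u)) : False := by
  by_cases hmm : m = m'
  · subst hmm; exact hnr (h1.trans h2.symm)
  · have hNoU : ¬ (Bar a b u x₀ ∧ min (y m) (y m') < y u ∧ y u < max (y m) (y m')) := by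
      rintro ⟨-, hlt, hlt'⟩
      rcases hy with ⟨ha1, ha2⟩ | ⟨ha1, ha2⟩
      · rcases min_lt_iff.mp hlt with h | h <;> linarith
      · rcases lt_max_iff.mp hlt' with h | h <;> linarith
    have hNoV : ¬ (Bar a b v x₀ ∧ min (y m) (y m') < y v ∧ y v < max (y m) (y m')) := by
      rintro ⟨-, hlt, hlt'⟩
      rcases hy with ⟨ha1, ha2⟩ | ⟨ha1, ha2⟩
      · rcases min_lt_iff.mp hlt with h | h <;> linarith
      · rcases lt_max_iff.mp hlt' with h | h <;> linarith
    have := uniqrun hab hdisj hadj ((Finset.univ.filter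
      (fun w => Bar a b w x₀ ∧ min (y m) (y m') < y w ∧ y w < max (y m) (y m'))).card)
      m m' hmu hmv hm'u hm'v x₀ hb hb' hNoU hNoV le_rfl
    exact hnr (h1.trans (this.trans h2.symm))

include hdisj hyuv in
lemma classifyA {d m : V} {x₀ : ℝ}
    (hnm : ∀ w x, (Gd G u v).Reachable d w → max (a u) (a v) ≤ x → x ≤ min (b u) (b v) →
      Bar a b w x → ¬ (y u < y w ∧ y w < y v))
    (hre : (Gd G u v).Reachable d m) (hmu : m ≠ u) (hmv : m ≠ v)
    (hbm : Bar a b m x₀) (hbu : Bar a b u x₀) (hbv : Bar a b v x₀)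
    (hnlt : ¬ (y m < y u)) : y v < y m := by
  have h1 : y m ≠ y u := hdisj m u hmu x₀ hbm.1 hbm.2 hbu.1 hbu.2
  have h2 : y m ≠ y v := hdisj m v hmv x₀ hbm.1 hbm.2 hbv.1 hbv.2
  have h3 : y u < y m := lt_of_le_of_ne (le_of_not_gt hnlt) (Ne.symm h1)
  rcases lt_trichotomy (y m) (y v) with h | h | h
  · exact absurd ⟨h3, h⟩ (hnm m x₀ hre (max_le hbu.1 hbv.1) (le_min hbu.2 hbv.2) hbm)
  · exact absurd h h2
  · exact h

include hdisj hyuv in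
lemma classifyB {d m : V} {x₀ : ℝ}
    (hnm : ∀ w x, (Gd G u v).Reachable d w → max (a u) (a v) ≤ x → x ≤ min (b u) (b v) →
      Bar a b w x → ¬ (y u < y w ∧ y w < y v))
    (hre : (Gd G u v).Reachable d m) (hmu : m ≠ u) (hmv : m ≠ v)
    (hbm : Bar a b m x₀) (hbu : Bar a b u x₀) (hbv : Bar a b v x₀)
    (hnlt : ¬ (y v < y m)) : y m < y u := by
  have h1 : y m ≠ y u := hdisj m u hmu x₀ hbm.1 hbm.2 hbu.1 hbu.2
  have h2 : y m ≠ y v := hdisj m v hmv x₀ hbm.1 hbm.2 hbv.1 hbv.2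
  have h3 : y m < y v := lt_of_le_of_ne (le_of_not_gt hnlt) h2
  rcases lt_trichotomy (y m) (y u) with h | h | h
  · exact h
  · exact absurd h h1
  · exact absurd ⟨h, h3⟩ (hnm m x₀ hre (max_le hbu.1 hbv.1) (le_min hbu.2 hbv.2) hbm)

include hab hdisj hadj hne hyuv in
lemma accessdata (hc : ¬ G.Adj u v) {d : V}
    (hnm : ∀ w x, (Gd G u v).Reachable d w → max (a u) (a v) ≤ x → x ≤ min (b u) (b v) →
      Bar a b w x → ¬ (y u < y w ∧ y w < y v))
    (hzadj : ∃ z, (Gd G u v).Reachable d z ∧ G.Adj z u)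
    (hwadj : ∃ w, (Gd G u v).Reachable d w ∧ G.Adj w v) :
    ∃ z w' : V, ∃ ξ β : ℝ, (Gd G u v).Reachable d z ∧ (Gd G u v).Reachable d w' ∧
      z ≠ u ∧ z ≠ v ∧ w' ≠ u ∧ w' ≠ v ∧
      Bar a b z ξ ∧ Bar a b u ξ ∧ (y z < y u ∨ (y u < y z ∧ ¬ Bar a b v ξ)) ∧
      Bar a b w' β ∧ Bar a b v β ∧ (y v < y w' ∨ (y w' < y v ∧ ¬ Bar a b u β)) := by
  obtain ⟨z, hzre, hzA⟩ := hzadj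
  obtain ⟨w', hwre, hwA⟩ := hwadj
  have hzu : z ≠ u := hzA.ne
  have hzv : z ≠ v := by rintro rfl; exact hc hzA.symm
  have hw'v : w' ≠ v := hwA.ne
  have hw'u : w' ≠ u := by rintro rfl; exact hc hwA
  obtain ⟨ξ, hcl⟩ := (hadj z u hzu).1 hzA
  obtain ⟨β, hcl'⟩ := (hadj w' v hw'v).1 hwA
  have hzbar : Bar a b z ξ := ⟨hcl.1, hcl.2.1⟩
  have hubar : Bar a b u ξ := ⟨hcl.2.2.1, hcl.2.2.2.1⟩
  have hwbar : Bar a b w' β := ⟨hcl'.1, hcl'.2.1⟩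
  have hvbar : Bar a b v β := ⟨hcl'.2.2.1, hcl'.2.2.2.1⟩
  refine ⟨z, w', ξ, β, hzre, hwre, hzu, hzv, hw'u, hw'v, hzbar, hubar, ?_, hwbar, hvbar, ?_⟩
  · have hyz : y z ≠ y u := hdisj z u hzu ξ hzbar.1 hzbar.2 hubar.1 hubar.2
    rcases lt_or_gt_of_ne hyz with h | h
    · exact Or.inl h
    · refine Or.inr ⟨h, ?_⟩
      intro hbv
      have hyzv : y z ≠ y v := hdisj z v hzv ξ hzbar.1 hzbar.2 hbv.1 hbv.2
      rcases lt_trichotomy (y z) (y v) with h1 | h1 | h1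
      · exact hnm z ξ hzre (max_le hubar.1 hbv.1) (le_min hubar.2 hbv.2) hzbar ⟨h, h1⟩
      · exact hyzv h1
      · exact hcl.2.2.2.2 v (Ne.symm hzv) (Ne.symm hne)
          ⟨hbv.1, hbv.2, lt_of_le_of_lt (min_le_right _ _) hyuv,
            lt_of_lt_of_le h1 (le_max_left _ _)⟩
  · have hyw : y w' ≠ y v := hdisj w' v hw'v β hwbar.1 hwbar.2 hvbar.1 hvbar.2
    rcases lt_or_gt_of_ne hyw with h | h
    · refine Or.inr ⟨h, ?_⟩
      intro hbu
      have hywu : y w' ≠ y u := hdisj w' u hw'u β hwbar.1 hwbar.2 hbu.1 hbu.2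
      rcases lt_trichotomy (y w') (y u) with h1 | h1 | h1
      · exact hcl'.2.2.2.2 u (Ne.symm hw'u) hne
          ⟨hbu.1, hbu.2, lt_of_le_of_lt (min_le_left _ _) h1,
            lt_of_lt_of_le hyuv (le_max_right _ _)⟩
      · exact hywu h1
      · exact hnm w' β hwre (max_le hbu.1 hvbar.1) (le_min hbu.2 hvbar.2) hwbar ⟨h1, h⟩
    · exact Or.inl h

include hab hdisj hadj hne hyuv hst in
lemma stripuniq (hc : ¬ G.Adj u v) :
    ∃ w₀ : V, w₀ ≠ u ∧ w₀ ≠ v ∧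
      ∀ x, max (a u) (a v) ≤ x → x ≤ min (b u) (b v) → ∀ w, w ≠ u → w ≠ v →
        Bar a b w x → y u < y w → y w < y v → (Gd G u v).Reachable w₀ w := by
  have hblock : ∀ x, max (a u) (a v) ≤ x → x ≤ min (b u) (b v) →
      ∃ w, w ≠ u ∧ w ≠ v ∧ Bar a b w x ∧ y u < y w ∧ y w < y v := by
    intro x h1 h2
    by_contra hcon; push_neg at hcon
    apply hc
    refine (hadj u v hne).2 ⟨x, le_trans (le_max_left _ _) h1, le_trans h2 (min_le_left _ _),
      le_trans (le_max_right _ _) h1, le_trans h2 (min_le_right _ _), ?_⟩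
    rintro w hw1 hw2 ⟨hb1, hb2, h3, h4⟩
    rw [min_eq_left hyuv.le] at h3
    rw [max_eq_right hyuv.le] at h4
    exact absurd h4 (not_lt.mpr (hcon w hw1 hw2 ⟨hb1, hb2⟩ h3))
  obtain ⟨w₀, hw₀u, hw₀v, hw₀bar, hw₀1, hw₀2⟩ := hblock (max (a u) (a v)) le_rfl hst
  set s := max (a u) (a v) with hs
  set t := min (b u) (b v) with ht
  classical
  set SA : Set ℝ :=
    ⋃ w ∈ {w : V | (y u < y w ∧ y w < y v) ∧ (Gd G u v).Reachable w₀ w}, Set.Icc (a w) (b w)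
    with hSA
  set SB : Set ℝ :=
    ⋃ w ∈ {w : V | (y u < y w ∧ y w < y v) ∧ ¬ (Gd G u v).Reachable w₀ w}, Set.Icc (a w) (b w)
    with hSB
  have hclosedA : IsClosed SA :=
    (Set.toFinite _).isClosed_biUnion (fun w _ => isClosed_Icc)
  have hclosedB : IsClosed SB :=
    (Set.toFinite _).isClosed_biUnion (fun w _ => isClosed_Icc)
  have hstripne : ∀ w, y u < y w → w ≠ u := by
    rintro w h1 rfl; exact lt_irrefl _ h1
  have hstripne' : ∀ w, y w < y v → w ≠ v := by
    rintro w h1 rfl; exact lt_irrefl _ h1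
  have hsame : ∀ x : ℝ, ∀ w w', Bar a b w x → Bar a b w' x →
      y u < y w → y w < y v → y u < y w' → y w' < y v → (Gd G u v).Reachable w w' := by
    intro x w w' hb hb' h1 h2 h1' h2'
    by_cases hww : w = w'
    · subst hww; exact Reachable.refl w
    · refine uniqrun hab hdisj hadj _ w w' (hstripne w h1) (hstripne' w h2) (hstripne w' h1')
        (hstripne' w' h2') x hb hb' ?_ ?_ le_rfl
      · rintro ⟨-, hlt, -⟩
        rcases min_lt_iff.mp hlt with h | h <;> linarith
      · rintro ⟨-, -, hlt⟩
        rcases lt_max_iff.mp hlt with h | h <;> linarith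
  have hcover : Set.Icc s t ⊆ SA ∪ SB := by
    intro x hx
    obtain ⟨w, hw1, hw2, hwb, hwy1, hwy2⟩ := hblock x hx.1 hx.2
    by_cases hre : (Gd G u v).Reachable w₀ w
    · exact Or.inl (Set.mem_biUnion ⟨⟨hwy1, hwy2⟩, hre⟩ ⟨hwb.1, hwb.2⟩)
    · exact Or.inr (Set.mem_biUnion ⟨⟨hwy1, hwy2⟩, hre⟩ ⟨hwb.1, hwb.2⟩)
  have hdisjoint : Set.Icc s t ∩ (SA ∩ SB) = ∅ := by
    rw [Set.eq_empty_iff_forall_notMem]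
    rintro x ⟨-, hxA, hxB⟩
    rw [hSA, Set.mem_iUnion₂] at hxA
    rw [hSB, Set.mem_iUnion₂] at hxB
    obtain ⟨w, ⟨⟨hwy1, hwy2⟩, hwre⟩, hwb⟩ := hxA
    obtain ⟨w', ⟨⟨hw'y1, hw'y2⟩, hw're⟩, hw'b⟩ := hxB
    exact hw're (hwre.trans (hsame x w w' ⟨hwb.1, hwb.2⟩ ⟨hw'b.1, hw'b.2⟩ hwy1 hwy2 hw'y1 hw'y2))
  have hpre : IsPreconnected (Set.Icc s t) := isPreconnected_Icc
  rcases (isPreconnected_iff_subset_of_disjoint_closed.mp hpre SA SB hclosedA hclosedB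
      hcover hdisjoint) with hsub | hsub
  · refine ⟨w₀, hw₀u, hw₀v, ?_⟩
    intro x h1 h2 w hw1 hw2 hwb hwy1 hwy2
    have hx : x ∈ SA := hsub ⟨h1, h2⟩
    rw [hSA, Set.mem_iUnion₂] at hx
    obtain ⟨w', ⟨⟨hw'y1, hw'y2⟩, hw're⟩, hw'b⟩ := hx
    exact hw're.trans (hsame x w' w ⟨hw'b.1, hw'b.2⟩ hwb hw'y1 hw'y2 hwy1 hwy2)
  · exfalso
    have hx : s ∈ SB := hsub ⟨le_rfl, hst⟩
    rw [hSB, Set.mem_iUnion₂] at hx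
    obtain ⟨w', ⟨⟨hw'y1, hw'y2⟩, hw're⟩, hw'b⟩ := hx
    exact hw're ((hsame s w₀ w' hw₀bar ⟨hw'b.1, hw'b.2⟩ hw₀1 hw₀2 hw'y1 hw'y2))


include hab hdisj hadj hne hyuv hst in
lemma core3 (hc : ¬ G.Adj u v) (d₁ d₂ d₃ : V)
    (h12 : ¬ (Gd G u v).Reachable d₁ d₂) (h13 : ¬ (Gd G u v).Reachable d₁ d₃)
    (h23 : ¬ (Gd G u v).Reachable d₂ d₃)
    (hnm : ∀ d, d = d₁ ∨ d = d₂ ∨ d = d₃ → ∀ w x, (Gd G u v).Reachable d w →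
      max (a u) (a v) ≤ x → x ≤ min (b u) (b v) → Bar a b w x → ¬ (y u < y w ∧ y w < y v))
    (haccu : ∀ d, d = d₁ ∨ d = d₂ ∨ d = d₃ → ∃ z, (Gd G u v).Reachable d z ∧ G.Adj z u)
    (haccv : ∀ d, d = d₁ ∨ d = d₂ ∨ d = d₃ → ∃ w, (Gd G u v).Reachable d w ∧ G.Adj w v) :
    False := by
  rcases le_total (a u) (a v) with hA | hA <;> rcases le_total (b u) (b v) with hB | hB
  · -- P3 : a u ≤ a v, b u ≤ b v
    have key : ∀ d, d = d₁ ∨ d = d₂ ∨ d = d₃ →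
        (∃ m, (Gd G u v).Reachable d m ∧ m ≠ u ∧ m ≠ v ∧ y v < y m ∧ Bar a b m (a v)) ∨
        (∃ m, (Gd G u v).Reachable d m ∧ m ≠ u ∧ m ≠ v ∧ y m < y u ∧ Bar a b m (b u)) := by
      intro d hd
      obtain ⟨z, w', ξ, β, hzre, hwre, hzu, hzv, hw'u, hw'v, hzbar, hubar, hzone, hwbar,
        hvbar, hwzone⟩ :=
        accessdata hab hdisj hadj hne hyuv hc (hnm d hd) (haccu d hd) (haccv d hd)
      obtain ⟨W⟩ : (Gd G u v).Reachable w' z := hwre.symm.trans hzre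
      rcases P3S hab hdisj hadj hne hyuv hst hA hB hw'u hw'v hzbar hubar hzone hwbar hvbar
        hwzone W with ⟨m, hm1, hm2, hm3, hm4, hm5⟩ | ⟨m, hm1, hm2, hm3, hm4, hm5⟩
      · refine Or.inl ⟨m, hwre.trans hm1, hm2, hm3, ?_, hm5⟩
        exact classifyA hdisj hyuv (hnm d hd) (hwre.trans hm1) hm2 hm3 hm5
          ⟨hA, le_trans (le_trans (le_max_right _ _) hst) (min_le_left _ _)⟩
          ⟨le_rfl, hab v⟩ hm4
      · exact Or.inr ⟨m, hwre.trans hm1, hm2, hm3, hm4, hm5⟩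
    rcases key d₁ (Or.inl rfl) with ⟨m1, q1⟩ | ⟨m1, q1⟩ <;>
      rcases key d₂ (Or.inr (Or.inl rfl)) with ⟨m2, q2⟩ | ⟨m2, q2⟩ <;>
        rcases key d₃ (Or.inr (Or.inr rfl)) with ⟨m3, q3⟩ | ⟨m3, q3⟩
    · exact clash hab hdisj hadj hyuv h12 q1.1 q2.1 q1.2.1 q1.2.2.1 q2.2.1 q2.2.2.1 q1.2.2.2.2 q2.2.2.2.2 (Or.inl ⟨q1.2.2.2.1, q2.2.2.2.1⟩)
    · exact clash hab hdisj hadj hyuv h12 q1.1 q2.1 q1.2.1 q1.2.2.1 q2.2.1 q2.2.2.1 q1.2.2.2.2 q2.2.2.2.2 (Or.inl ⟨q1.2.2.2.1, q2.2.2.2.1⟩)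
    · exact clash hab hdisj hadj hyuv h13 q1.1 q3.1 q1.2.1 q1.2.2.1 q3.2.1 q3.2.2.1 q1.2.2.2.2 q3.2.2.2.2 (Or.inl ⟨q1.2.2.2.1, q3.2.2.2.1⟩)
    · exact clash hab hdisj hadj hyuv h23 q2.1 q3.1 q2.2.1 q2.2.2.1 q3.2.1 q3.2.2.1 q2.2.2.2.2 q3.2.2.2.2 (Or.inr ⟨q2.2.2.2.1, q3.2.2.2.1⟩)
    · exact clash hab hdisj hadj hyuv h23 q2.1 q3.1 q2.2.1 q2.2.2.1 q3.2.1 q3.2.2.1 q2.2.2.2.2 q3.2.2.2.2 (Or.inl ⟨q2.2.2.2.1, q3.2.2.2.1⟩)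
    · exact clash hab hdisj hadj hyuv h13 q1.1 q3.1 q1.2.1 q1.2.2.1 q3.2.1 q3.2.2.1 q1.2.2.2.2 q3.2.2.2.2 (Or.inr ⟨q1.2.2.2.1, q3.2.2.2.1⟩)
    · exact clash hab hdisj hadj hyuv h12 q1.1 q2.1 q1.2.1 q1.2.2.1 q2.2.1 q2.2.2.1 q1.2.2.2.2 q2.2.2.2.2 (Or.inr ⟨q1.2.2.2.1, q2.2.2.2.1⟩)
    · exact clash hab hdisj hadj hyuv h12 q1.1 q2.1 q1.2.1 q1.2.2.1 q2.2.1 q2.2.2.1 q1.2.2.2.2 q2.2.2.2.2 (Or.inr ⟨q1.2.2.2.1, q2.2.2.2.1⟩)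
  · -- P1 : a u ≤ a v, b v ≤ b u
    have key : ∀ d, d = d₁ ∨ d = d₂ ∨ d = d₃ →
        (∃ m, (Gd G u v).Reachable d m ∧ m ≠ u ∧ m ≠ v ∧ y v < y m ∧ Bar a b m (a v)) ∨
        (∃ m, (Gd G u v).Reachable d m ∧ m ≠ u ∧ m ≠ v ∧ y v < y m ∧ Bar a b m (b v)) := by
      intro d hd
      obtain ⟨z, w', ξ, β, hzre, hwre, hzu, hzv, hw'u, hw'v, hzbar, hubar, hzone, hwbar,
        hvbar, hwzone⟩ :=
        accessdata hab hdisj hadj hne hyuv hc (hnm d hd) (haccu d hd) (haccv d hd)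
      obtain ⟨W⟩ : (Gd G u v).Reachable w' z := hwre.symm.trans hzre
      rcases P1S hab hdisj hadj hne hyuv hst hA hB hw'u hw'v hzbar hubar hzone hwbar hvbar
        hwzone W with ⟨m, hm1, hm2, hm3, hm4, hm5⟩ | ⟨m, hm1, hm2, hm3, hm4, hm5⟩
      · refine Or.inl ⟨m, hwre.trans hm1, hm2, hm3, ?_, hm5⟩
        exact classifyA hdisj hyuv (hnm d hd) (hwre.trans hm1) hm2 hm3 hm5
          ⟨hA, le_trans (le_trans (le_max_right _ _) hst) (min_le_left _ _)⟩
          ⟨le_rfl, hab v⟩ hm4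
      · refine Or.inr ⟨m, hwre.trans hm1, hm2, hm3, ?_, hm5⟩
        exact classifyA hdisj hyuv (hnm d hd) (hwre.trans hm1) hm2 hm3 hm5
          ⟨le_trans (le_trans (le_max_left _ _) hst) (min_le_right _ _), hB⟩
          ⟨hab v, le_rfl⟩ hm4
    rcases key d₁ (Or.inl rfl) with ⟨m1, q1⟩ | ⟨m1, q1⟩ <;>
      rcases key d₂ (Or.inr (Or.inl rfl)) with ⟨m2, q2⟩ | ⟨m2, q2⟩ <;>
        rcases key d₃ (Or.inr (Or.inr rfl)) with ⟨m3, q3⟩ | ⟨m3, q3⟩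
    · exact clash hab hdisj hadj hyuv h12 q1.1 q2.1 q1.2.1 q1.2.2.1 q2.2.1 q2.2.2.1 q1.2.2.2.2 q2.2.2.2.2 (Or.inl ⟨q1.2.2.2.1, q2.2.2.2.1⟩)
    · exact clash hab hdisj hadj hyuv h12 q1.1 q2.1 q1.2.1 q1.2.2.1 q2.2.1 q2.2.2.1 q1.2.2.2.2 q2.2.2.2.2 (Or.inl ⟨q1.2.2.2.1, q2.2.2.2.1⟩)
    · exact clash hab hdisj hadj hyuv h13 q1.1 q3.1 q1.2.1 q1.2.2.1 q3.2.1 q3.2.2.1 q1.2.2.2.2 q3.2.2.2.2 (Or.inl ⟨q1.2.2.2.1, q3.2.2.2.1⟩)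
    · exact clash hab hdisj hadj hyuv h23 q2.1 q3.1 q2.2.1 q2.2.2.1 q3.2.1 q3.2.2.1 q2.2.2.2.2 q3.2.2.2.2 (Or.inl ⟨q2.2.2.2.1, q3.2.2.2.1⟩)
    · exact clash hab hdisj hadj hyuv h23 q2.1 q3.1 q2.2.1 q2.2.2.1 q3.2.1 q3.2.2.1 q2.2.2.2.2 q3.2.2.2.2 (Or.inl ⟨q2.2.2.2.1, q3.2.2.2.1⟩)
    · exact clash hab hdisj hadj hyuv h13 q1.1 q3.1 q1.2.1 q1.2.2.1 q3.2.1 q3.2.2.1 q1.2.2.2.2 q3.2.2.2.2 (Or.inl ⟨q1.2.2.2.1, q3.2.2.2.1⟩)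
    · exact clash hab hdisj hadj hyuv h12 q1.1 q2.1 q1.2.1 q1.2.2.1 q2.2.1 q2.2.2.1 q1.2.2.2.2 q2.2.2.2.2 (Or.inl ⟨q1.2.2.2.1, q2.2.2.2.1⟩)
    · exact clash hab hdisj hadj hyuv h12 q1.1 q2.1 q1.2.1 q1.2.2.1 q2.2.1 q2.2.2.1 q1.2.2.2.2 q2.2.2.2.2 (Or.inl ⟨q1.2.2.2.1, q2.2.2.2.1⟩)
  · -- P2 : a v ≤ a u, b u ≤ b v
    have key : ∀ d, d = d₁ ∨ d = d₂ ∨ d = d₃ →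
        (∃ m, (Gd G u v).Reachable d m ∧ m ≠ u ∧ m ≠ v ∧ y m < y u ∧ Bar a b m (a u)) ∨
        (∃ m, (Gd G u v).Reachable d m ∧ m ≠ u ∧ m ≠ v ∧ y m < y u ∧ Bar a b m (b u)) := by
      intro d hd
      obtain ⟨z, w', ξ, β, hzre, hwre, hzu, hzv, hw'u, hw'v, hzbar, hubar, hzone, hwbar,
        hvbar, hwzone⟩ :=
        accessdata hab hdisj hadj hne hyuv hc (hnm d hd) (haccu d hd) (haccv d hd)
      obtain ⟨W⟩ : (Gd G u v).Reachable z w' := hzre.symm.trans hwre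
      rcases P2S hab hdisj hadj hne hyuv hst hA hB hzu hzv hzbar hubar hzone hwbar hvbar
        hwzone W with ⟨m, hm1, hm2, hm3, hm4, hm5⟩ | ⟨m, hm1, hm2, hm3, hm4, hm5⟩
      · refine Or.inl ⟨m, hzre.trans hm1, hm2, hm3, ?_, hm5⟩
        exact classifyB hdisj hyuv (hnm d hd) (hzre.trans hm1) hm2 hm3 hm5
          ⟨le_rfl, hab u⟩
          ⟨hA, le_trans (le_trans (le_max_left _ _) hst) (min_le_right _ _)⟩ hm4
      · refine Or.inr ⟨m, hzre.trans hm1, hm2, hm3, ?_, hm5⟩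
        exact classifyB hdisj hyuv (hnm d hd) (hzre.trans hm1) hm2 hm3 hm5
          ⟨hab u, le_rfl⟩
          ⟨le_trans (le_trans (le_max_right _ _) hst) (min_le_left _ _), hB⟩ hm4
    rcases key d₁ (Or.inl rfl) with ⟨m1, q1⟩ | ⟨m1, q1⟩ <;>
      rcases key d₂ (Or.inr (Or.inl rfl)) with ⟨m2, q2⟩ | ⟨m2, q2⟩ <;>
        rcases key d₃ (Or.inr (Or.inr rfl)) with ⟨m3, q3⟩ | ⟨m3, q3⟩
    · exact clash hab hdisj hadj hyuv h12 q1.1 q2.1 q1.2.1 q1.2.2.1 q2.2.1 q2.2.2.1 q1.2.2.2.2 q2.2.2.2.2 (Or.inr ⟨q1.2.2.2.1, q2.2.2.2.1⟩)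
    · exact clash hab hdisj hadj hyuv h12 q1.1 q2.1 q1.2.1 q1.2.2.1 q2.2.1 q2.2.2.1 q1.2.2.2.2 q2.2.2.2.2 (Or.inr ⟨q1.2.2.2.1, q2.2.2.2.1⟩)
    · exact clash hab hdisj hadj hyuv h13 q1.1 q3.1 q1.2.1 q1.2.2.1 q3.2.1 q3.2.2.1 q1.2.2.2.2 q3.2.2.2.2 (Or.inr ⟨q1.2.2.2.1, q3.2.2.2.1⟩)
    · exact clash hab hdisj hadj hyuv h23 q2.1 q3.1 q2.2.1 q2.2.2.1 q3.2.1 q3.2.2.1 q2.2.2.2.2 q3.2.2.2.2 (Or.inr ⟨q2.2.2.2.1, q3.2.2.2.1⟩)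
    · exact clash hab hdisj hadj hyuv h23 q2.1 q3.1 q2.2.1 q2.2.2.1 q3.2.1 q3.2.2.1 q2.2.2.2.2 q3.2.2.2.2 (Or.inr ⟨q2.2.2.2.1, q3.2.2.2.1⟩)
    · exact clash hab hdisj hadj hyuv h13 q1.1 q3.1 q1.2.1 q1.2.2.1 q3.2.1 q3.2.2.1 q1.2.2.2.2 q3.2.2.2.2 (Or.inr ⟨q1.2.2.2.1, q3.2.2.2.1⟩)
    · exact clash hab hdisj hadj hyuv h12 q1.1 q2.1 q1.2.1 q1.2.2.1 q2.2.1 q2.2.2.1 q1.2.2.2.2 q2.2.2.2.2 (Or.inr ⟨q1.2.2.2.1, q2.2.2.2.1⟩)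
    · exact clash hab hdisj hadj hyuv h12 q1.1 q2.1 q1.2.1 q1.2.2.1 q2.2.1 q2.2.2.1 q1.2.2.2.2 q2.2.2.2.2 (Or.inr ⟨q1.2.2.2.1, q2.2.2.2.1⟩)
  · -- P4 : a v ≤ a u, b v ≤ b u
    have key : ∀ d, d = d₁ ∨ d = d₂ ∨ d = d₃ →
        (∃ m, (Gd G u v).Reachable d m ∧ m ≠ u ∧ m ≠ v ∧ y m < y u ∧ Bar a b m (a u)) ∨
        (∃ m, (Gd G u v).Reachable d m ∧ m ≠ u ∧ m ≠ v ∧ y v < y m ∧ Bar a b m (b v)) := by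
      intro d hd
      obtain ⟨z, w', ξ, β, hzre, hwre, hzu, hzv, hw'u, hw'v, hzbar, hubar, hzone, hwbar,
        hvbar, hwzone⟩ :=
        accessdata hab hdisj hadj hne hyuv hc (hnm d hd) (haccu d hd) (haccv d hd)
      obtain ⟨W⟩ : (Gd G u v).Reachable w' z := hwre.symm.trans hzre
      rcases P4S hab hdisj hadj hne hyuv hst hA hB hw'u hw'v hzbar hubar hzone hwbar hvbar
        hwzone W with ⟨m, hm1, hm2, hm3, hm4, hm5⟩ | ⟨m, hm1, hm2, hm3, hm4, hm5⟩
      · exact Or.inl ⟨m, hwre.trans hm1, hm2, hm3, hm4, hm5⟩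
      · refine Or.inr ⟨m, hwre.trans hm1, hm2, hm3, ?_, hm5⟩
        exact classifyA hdisj hyuv (hnm d hd) (hwre.trans hm1) hm2 hm3 hm5
          ⟨le_trans (le_trans (le_max_left _ _) hst) (min_le_right _ _), hB⟩
          ⟨hab v, le_rfl⟩ hm4
    rcases key d₁ (Or.inl rfl) with ⟨m1, q1⟩ | ⟨m1, q1⟩ <;>
      rcases key d₂ (Or.inr (Or.inl rfl)) with ⟨m2, q2⟩ | ⟨m2, q2⟩ <;>
        rcases key d₃ (Or.inr (Or.inr rfl)) with ⟨m3, q3⟩ | ⟨m3, q3⟩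
    · exact clash hab hdisj hadj hyuv h12 q1.1 q2.1 q1.2.1 q1.2.2.1 q2.2.1 q2.2.2.1 q1.2.2.2.2 q2.2.2.2.2 (Or.inr ⟨q1.2.2.2.1, q2.2.2.2.1⟩)
    · exact clash hab hdisj hadj hyuv h12 q1.1 q2.1 q1.2.1 q1.2.2.1 q2.2.1 q2.2.2.1 q1.2.2.2.2 q2.2.2.2.2 (Or.inr ⟨q1.2.2.2.1, q2.2.2.2.1⟩)
    · exact clash hab hdisj hadj hyuv h13 q1.1 q3.1 q1.2.1 q1.2.2.1 q3.2.1 q3.2.2.1 q1.2.2.2.2 q3.2.2.2.2 (Or.inr ⟨q1.2.2.2.1, q3.2.2.2.1⟩)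
    · exact clash hab hdisj hadj hyuv h23 q2.1 q3.1 q2.2.1 q2.2.2.1 q3.2.1 q3.2.2.1 q2.2.2.2.2 q3.2.2.2.2 (Or.inl ⟨q2.2.2.2.1, q3.2.2.2.1⟩)
    · exact clash hab hdisj hadj hyuv h23 q2.1 q3.1 q2.2.1 q2.2.2.1 q3.2.1 q3.2.2.1 q2.2.2.2.2 q3.2.2.2.2 (Or.inr ⟨q2.2.2.2.1, q3.2.2.2.1⟩)
    · exact clash hab hdisj hadj hyuv h13 q1.1 q3.1 q1.2.1 q1.2.2.1 q3.2.1 q3.2.2.1 q1.2.2.2.2 q3.2.2.2.2 (Or.inl ⟨q1.2.2.2.1, q3.2.2.2.1⟩)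
    · exact clash hab hdisj hadj hyuv h12 q1.1 q2.1 q1.2.1 q1.2.2.1 q2.2.1 q2.2.2.1 q1.2.2.2.2 q2.2.2.2.2 (Or.inl ⟨q1.2.2.2.1, q2.2.2.2.1⟩)
    · exact clash hab hdisj hadj hyuv h12 q1.1 q2.1 q1.2.1 q1.2.2.1 q2.2.1 q2.2.2.1 q1.2.2.2.2 q2.2.2.2.2 (Or.inl ⟨q1.2.2.2.1, q2.2.2.2.1⟩)

include hab hdisj hadj hne hyuv hst in
lemma core2 (hc : ¬ G.Adj u v) (c₁ c₂ c₃ c₄ : V)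
    (h12 : ¬ (Gd G u v).Reachable c₁ c₂) (h13 : ¬ (Gd G u v).Reachable c₁ c₃)
    (h14 : ¬ (Gd G u v).Reachable c₁ c₄) (h23 : ¬ (Gd G u v).Reachable c₂ c₃)
    (h24 : ¬ (Gd G u v).Reachable c₂ c₄) (h34 : ¬ (Gd G u v).Reachable c₃ c₄)
    (haccu : ∀ d, d = c₁ ∨ d = c₂ ∨ d = c₃ ∨ d = c₄ →
      ∃ z, (Gd G u v).Reachable d z ∧ G.Adj z u)
    (haccv : ∀ d, d = c₁ ∨ d = c₂ ∨ d = c₃ ∨ d = c₄ →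
      ∃ w, (Gd G u v).Reachable d w ∧ G.Adj w v) : False := by
  obtain ⟨w₀, hw₀u, hw₀v, hW⟩ := stripuniq hab hdisj hadj hne hyuv hst hc
  have hnm : ∀ d, ¬ (Gd G u v).Reachable d w₀ → ∀ w x, (Gd G u v).Reachable d w →
      max (a u) (a v) ≤ x → x ≤ min (b u) (b v) → Bar a b w x →
      ¬ (y u < y w ∧ y w < y v) := by
    rintro d hd w x hdw h1 h2 hb ⟨hy1, hy2⟩
    have hwu : w ≠ u := by rintro rfl; exact lt_irrefl _ hy1
    have hwv : w ≠ v := by rintro rfl; exact lt_irrefl _ hy2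
    exact hd (hdw.trans (hW x h1 h2 w hwu hwv hb hy1 hy2).symm)
  by_cases k1 : (Gd G u v).Reachable c₁ w₀
  · have n2 : ¬ (Gd G u v).Reachable c₂ w₀ := fun h => h12 (k1.trans h.symm)
    have n3 : ¬ (Gd G u v).Reachable c₃ w₀ := fun h => h13 (k1.trans h.symm)
    have n4 : ¬ (Gd G u v).Reachable c₄ w₀ := fun h => h14 (k1.trans h.symm)
    refine core3 hab hdisj hadj hne hyuv hst hc c₂ c₃ c₄ h23 h24 h34 ?_
      (fun d hd => haccu d (by tauto)) (fun d hd => haccv d (by tauto))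
    rintro d (rfl | rfl | rfl)
    exacts [hnm _ n2, hnm _ n3, hnm _ n4]
  · by_cases k2 : (Gd G u v).Reachable c₂ w₀
    · have n3 : ¬ (Gd G u v).Reachable c₃ w₀ := fun h => h23 (k2.trans h.symm)
      have n4 : ¬ (Gd G u v).Reachable c₄ w₀ := fun h => h24 (k2.trans h.symm)
      refine core3 hab hdisj hadj hne hyuv hst hc c₁ c₃ c₄ h13 h14 h34 ?_
        (fun d hd => haccu d (by tauto)) (fun d hd => haccv d (by tauto))
      rintro d (rfl | rfl | rfl)
      exacts [hnm _ k1, hnm _ n3, hnm _ n4]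
    · by_cases k3 : (Gd G u v).Reachable c₃ w₀
      · have n4 : ¬ (Gd G u v).Reachable c₄ w₀ := fun h => h34 (k3.trans h.symm)
        refine core3 hab hdisj hadj hne hyuv hst hc c₁ c₂ c₄ h12 h14 h24 ?_
          (fun d hd => haccu d (by tauto)) (fun d hd => haccv d (by tauto))
        rintro d (rfl | rfl | rfl)
        exacts [hnm _ k1, hnm _ k2, hnm _ n4]
      · refine core3 hab hdisj hadj hne hyuv hst hc c₁ c₂ c₃ h12 h13 h23 ?_
          (fun d hd => haccu d (by tauto)) (fun d hd => haccv d (by tauto))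
        rintro d (rfl | rfl | rfl)
        exacts [hnm _ k1, hnm _ k2, hnm _ k3]

include hab hdisj hadj hne in
lemma disjcase (hc : ¬ G.Adj u v) (hgap : b u < a v) (d₁ d₂ : V)
    (h12 : ¬ (Gd G u v).Reachable d₁ d₂)
    (haccu : ∀ d, d = d₁ ∨ d = d₂ → ∃ z, (Gd G u v).Reachable d z ∧ G.Adj z u)
    (haccv : ∀ d, d = d₁ ∨ d = d₂ → ∃ w, (Gd G u v).Reachable d w ∧ G.Adj w v) : False := by
  have hper : ∀ d, (∃ z, (Gd G u v).Reachable d z ∧ G.Adj z u) →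
      (∃ w, (Gd G u v).Reachable d w ∧ G.Adj w v) →
      ∃ m, (Gd G u v).Reachable d m ∧ m ≠ u ∧ m ≠ v ∧ Bar a b m ((b u + a v) / 2) := by
    rintro d ⟨z, hzre, hzA⟩ ⟨w', hwre, hwA⟩
    have hzu : z ≠ u := hzA.ne
    have hzv : z ≠ v := by rintro rfl; exact hc hzA.symm
    obtain ⟨ξ, hcl⟩ := (hadj z u hzu).1 hzA
    obtain ⟨β, hcl'⟩ := (hadj w' v hwA.ne).1 hwA
    obtain ⟨W⟩ : (Gd G u v).Reachable z w' := hzre.symm.trans hwre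
    obtain ⟨m, hm, hbar⟩ := hull hadj W ξ β ((b u + a v) / 2) ⟨hcl.1, hcl.2.1⟩
      ⟨hcl'.1, hcl'.2.1⟩
      (min_le_of_left_le (by linarith [hcl.2.2.2.1]))
      (le_max_of_le_right (by linarith [hcl'.2.2.1]))
    exact ⟨m, hzre.trans (reach_of_support W hm), (support_ne W hzu hzv m hm).1,
      (support_ne W hzu hzv m hm).2, hbar⟩
  obtain ⟨m₁, hre₁, hm₁u, hm₁v, hb₁⟩ := hper d₁ (haccu d₁ (Or.inl rfl)) (haccv d₁ (Or.inl rfl))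
  obtain ⟨m₂, hre₂, hm₂u, hm₂v, hb₂⟩ := hper d₂ (haccu d₂ (Or.inr rfl)) (haccv d₂ (Or.inr rfl))
  by_cases hmm : m₁ = m₂
  · subst hmm; exact h12 (hre₁.trans hre₂.symm)
  · have hNoU : ¬ (Bar a b u ((b u + a v) / 2) ∧
        min (y m₁) (y m₂) < y u ∧ y u < max (y m₁) (y m₂)) := by
      rintro ⟨hb, -, -⟩; linarith [hb.2]
    have hNoV : ¬ (Bar a b v ((b u + a v) / 2) ∧
        min (y m₁) (y m₂) < y v ∧ y v < max (y m₁) (y m₂)) := by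
      rintro ⟨hb, -, -⟩; linarith [hb.1]
    have := uniqrun hab hdisj hadj ((Finset.univ.filter (fun w => Bar a b w ((b u + a v) / 2) ∧
        min (y m₁) (y m₂) < y w ∧ y w < max (y m₁) (y m₂))).card)
      m₁ m₂ hm₁u hm₁v hm₂u hm₂v ((b u + a v) / 2) hb₁ hb₂ hNoU hNoV le_rfl
    exact h12 (hre₁.trans (this.trans hre₂.symm))

include hadj in
lemma find_neighbor (hne : u ≠ v)
    (hconn : (((⊤ : G.Subgraph).deleteVerts {u}).coe).Connected)
    (c : V) (hcu : c ≠ u) (hcv : c ≠ v) :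
    ∃ z, (Gd G u v).Reachable c z ∧ G.Adj z v := by
  have hcmem : c ∈ ((⊤ : G.Subgraph).deleteVerts {u}).verts := by
    simp [SimpleGraph.Subgraph.deleteVerts_verts, hcu]
  have hvmem : v ∈ ((⊤ : G.Subgraph).deleteVerts {u}).verts := by
    simp [SimpleGraph.Subgraph.deleteVerts_verts, hne.symm]
  have main : ∀ (x yv : ((⊤ : G.Subgraph).deleteVerts {u}).verts)
      (W : (((⊤ : G.Subgraph).deleteVerts {u}).coe).Walk x yv), (yv : V) = v → (x : V) ≠ v →
      ∃ z, (Gd G u v).Reachable (x : V) z ∧ G.Adj z v := by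
    intro x yv W
    induction W with
    | nil => intro h1 h2; exact absurd h1 h2
    | @cons p q r h W ih =>
      intro h1 h2
      have hpq : G.Adj (p : V) (q : V) := by
        have h' : ((⊤ : G.Subgraph).deleteVerts {u}).Adj (p : V) (q : V) := h
        rw [SimpleGraph.Subgraph.deleteVerts_adj] at h'
        exact (SimpleGraph.Subgraph.top_adj).1 h'.2.2.2.2
      have hpu : (p : V) ≠ u := by
        have h' := p.2
        simp only [SimpleGraph.Subgraph.deleteVerts_verts, Set.mem_diff,
          Set.mem_singleton_iff] at h'
        exact h'.2
      have hqu : (q : V) ≠ u := by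
        have h' := q.2
        simp only [SimpleGraph.Subgraph.deleteVerts_verts, Set.mem_diff,
          Set.mem_singleton_iff] at h'
        exact h'.2
      by_cases hqv : (q : V) = v
      · exact ⟨(p : V), Reachable.refl _, hqv ▸ hpq⟩
      · obtain ⟨z, hz1, hz2⟩ := ih h1 hqv
        refine ⟨z, Reachable.trans (SimpleGraph.Adj.reachable ?_) hz1, hz2⟩
        exact ⟨hpq, hpu, h2, hqu, hqv⟩
  exact main ⟨c, hcmem⟩ ⟨v, hvmem⟩ (hconn.preconnected ⟨c, hcmem⟩ ⟨v, hvmem⟩).some rfl hcv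

lemma reach_lift :
    ∀ (p q : V) (W : (Gd G u v).Walk p q)
    (hp : p ∈ ((⊤ : G.Subgraph).deleteVerts {u, v}).verts)
    (hq : q ∈ ((⊤ : G.Subgraph).deleteVerts {u, v}).verts),
    (((⊤ : G.Subgraph).deleteVerts {u, v}).coe).Reachable ⟨p, hp⟩ ⟨q, hq⟩ := by
  intro p q W
  induction W with
  | nil => intro hp hq; exact Reachable.refl _
  | @cons p q r h W ih =>
    intro hp hr
    have hqmem : q ∈ ((⊤ : G.Subgraph).deleteVerts {u, v}).verts := by
      simp [SimpleGraph.Subgraph.deleteVerts_verts]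
      exact ⟨h.2.2.2.1, h.2.2.2.2⟩
    refine Reachable.trans (SimpleGraph.Adj.reachable ?_) (ih hqmem hr)
    show ((⊤ : G.Subgraph).deleteVerts {u, v}).Adj p q
    rw [SimpleGraph.Subgraph.deleteVerts_adj]
    refine ⟨trivial, ?_, trivial, ?_, (SimpleGraph.Subgraph.top_adj).2 h.1⟩
    · simp; exact ⟨h.2.1, h.2.2.1⟩
    · simp; exact ⟨h.2.2.2.1, h.2.2.2.2⟩

end Patterns

end Rep

end BV



/-- `(y, a, b)` is a strong bar visibility representation of the graph `G`:
vertex `v` is the horizontal bar `[a v, b v] × {y v}`, the bars are pairwise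
disjoint, and two distinct vertices are adjacent iff some vertical segment
(of possibly zero width) joins their bars without meeting any other bar
(touching the endpoint of an intermediate bar counts as obstruction). -/
def IsStrongBarVisibilityRep {V : Type*} (G : SimpleGraph V)
    (y a b : V → ℝ) : Prop :=
  (∀ v, a v ≤ b v) ∧
  (∀ u v : V, u ≠ v →
    ∀ x : ℝ, a u ≤ x → x ≤ b u → a v ≤ x → x ≤ b v → y u ≠ y v) ∧
  (∀ u v : V, u ≠ v →
    (G.Adj u v ↔ ∃ x : ℝ, a u ≤ x ∧ x ≤ b u ∧ a v ≤ x ∧ x ≤ b v ∧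
      ∀ w : V, w ≠ u → w ≠ v →
        ¬ (a w ≤ x ∧ x ≤ b w ∧ min (y u) (y v) < y w ∧ y w < max (y u) (y v))))

/-- `H` is a minor of `G`: there are nonempty, pairwise disjoint connected
branch sets in `G`, one for each vertex of `H`, with an edge of `G` between the
branch sets of any two adjacent vertices of `H`. -/
def HasMinor {V W : Type*} (G : SimpleGraph V) (H : SimpleGraph W) : Prop :=
  ∃ f : W → Set V, (∀ w, (f w).Nonempty) ∧ (∀ w, (G.induce (f w)).Connected) ∧
    (∀ w w', w ≠ w' → Disjoint (f w) (f w')) ∧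
    (∀ w w', H.Adj w w' → ∃ p ∈ f w, ∃ q ∈ f w', G.Adj p q)

/-- Planarity in the sense of Wagner's theorem: `G` has neither a `K₅` minor
nor a `K₃,₃` minor. -/
def IsPlanar {V : Type*} (G : SimpleGraph V) : Prop :=
  ¬ HasMinor G (⊤ : SimpleGraph (Fin 5)) ∧
  ¬ HasMinor G (completeBipartiteGraph (Fin 3) (Fin 3))

/-- `G` is `2`-connected: it has at least three vertices and remains connected
after deleting any single vertex. -/
def TwoConnected {V : Type*} [Fintype V] (G : SimpleGraph V) : Prop :=
  3 ≤ Fintype.card V ∧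
  ∀ v : V, (((⊤ : G.Subgraph).deleteVerts {v}).coe).Connected

/-- If a `2`-connected planar graph admits a strong bar visibility
representation, then there is no pair of non-adjacent vertices whose removal
separates the graph into four or more connected components. -/
theorem strong_bar_visibility_no_bad_pair {V : Type*} [Fintype V]
    (G : SimpleGraph V) (h2 : TwoConnected G) (hplanar : IsPlanar G)
    (y a b : V → ℝ) (hrep : IsStrongBarVisibilityRep G y a b) :
    ¬ ∃ u v : V, u ≠ v ∧ ¬ G.Adj u v ∧
      4 ≤ Nat.card (((⊤ : G.Subgraph).deleteVerts {u, v}).coe.ConnectedComponent) := by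
  classical
  rintro ⟨u, v, hne, hnadj, hcard⟩
  obtain ⟨hab, hdisj, hadj⟩ := hrep
  have hadj' : ∀ p q : V, p ≠ q → (G.Adj p q ↔ ∃ x, BV.Clear y a b p q x) := hadj
  -- extract four distinct components
  haveI : Finite (((⊤ : G.Subgraph).deleteVerts {u, v}).coe.ConnectedComponent) :=
    Quot.finite _
  haveI := Fintype.ofFinite (((⊤ : G.Subgraph).deleteVerts {u, v}).coe.ConnectedComponent)
  rw [Nat.card_eq_fintype_card] at hcard
  have hcard4 : Fintype.card (Fin 4) ≤
      Fintype.card (((⊤ : G.Subgraph).deleteVerts {u, v}).coe.ConnectedComponent) := by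
    simpa using hcard
  obtain ⟨f⟩ := Function.Embedding.nonempty_of_card_le hcard4
  have hrep4 : ∀ i : Fin 4, ∃ w, (((⊤ : G.Subgraph).deleteVerts {u, v}).coe).connectedComponentMk
      w = f i := fun i => (f i).exists_rep
  choose rep hrepeq using hrep4
  set x : Fin 4 → V := fun i => ((rep i : ((⊤ : G.Subgraph).deleteVerts {u, v}).verts) : V)
    with hx
  have hxmem : ∀ i, (x i) ∈ ((⊤ : G.Subgraph).deleteVerts {u, v}).verts := fun i => (rep i).2
  have hxuv : ∀ i, x i ≠ u ∧ x i ≠ v := by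
    intro i
    have h' := (rep i).2
    simp only [SimpleGraph.Subgraph.deleteVerts_verts, Set.mem_diff, Set.mem_insert_iff,
      Set.mem_singleton_iff] at h'
    exact ⟨fun he => h'.2 (Or.inl he), fun he => h'.2 (Or.inr he)⟩
  have nonreach : ∀ i j : Fin 4, i ≠ j → ¬ (BV.Gd G u v).Reachable (x i) (x j) := by
    intro i j hij hr
    obtain ⟨W⟩ := hr
    have hlift := BV.reach_lift (u := u) (v := v) (x i) (x j) W (hxmem i) (hxmem j)
    have heq : f i = f j := by
      rw [← hrepeq i, ← hrepeq j]
      exact SimpleGraph.ConnectedComponent.sound hlift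
    exact hij (f.injective heq)
  -- accesses from 2-connectivity
  have haccv : ∀ i : Fin 4, ∃ z, (BV.Gd G u v).Reachable (x i) z ∧ G.Adj z v := by
    intro i
    exact BV.find_neighbor hadj' hne (h2.2 u) (x i) (hxuv i).1 (hxuv i).2
  have haccu : ∀ i : Fin 4, ∃ z, (BV.Gd G u v).Reachable (x i) z ∧ G.Adj z u := by
    intro i
    have := BV.find_neighbor hadj' hne.symm (h2.2 v) (x i) (hxuv i).2 (hxuv i).1
    rwa [show BV.Gd G v u = BV.Gd G u v from BV.gd_comm] at this
  -- dispatch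
  rcases lt_or_ge (b u) (a v) with hgap | hg1
  · refine BV.disjcase hab hdisj hadj' hne hnadj hgap (x 0) (x 1)
      (nonreach 0 1 (by decide)) ?_ ?_
    · rintro d (rfl | rfl)
      exacts [haccu 0, haccu 1]
    · rintro d (rfl | rfl)
      exacts [haccv 0, haccv 1]
  rcases lt_or_ge (b v) (a u) with hgap | hg2
  · have hnadj' : ¬ G.Adj v u := fun h => hnadj h.symm
    have nonreach' : ¬ (BV.Gd G v u).Reachable (x 0) (x 1) := by
      rw [show BV.Gd G v u = BV.Gd G u v from BV.gd_comm]
      exact nonreach 0 1 (by decide)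
    refine BV.disjcase hab hdisj hadj' hne.symm hnadj' hgap (x 0) (x 1) nonreach' ?_ ?_
    · rintro d (rfl | rfl) <;>
        [skip; skip] <;>
          first
          | (obtain ⟨z, hz1, hz2⟩ := haccv 0
             exact ⟨z, by rw [show BV.Gd G v u = BV.Gd G u v from BV.gd_comm]; exact hz1, hz2⟩)
          | (obtain ⟨z, hz1, hz2⟩ := haccv 1
             exact ⟨z, by rw [show BV.Gd G v u = BV.Gd G u v from BV.gd_comm]; exact hz1, hz2⟩)
    · rintro d (rfl | rfl) <;>
        [skip; skip] <;>
          first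
          | (obtain ⟨z, hz1, hz2⟩ := haccu 0
             exact ⟨z, by rw [show BV.Gd G v u = BV.Gd G u v from BV.gd_comm]; exact hz1, hz2⟩)
          | (obtain ⟨z, hz1, hz2⟩ := haccu 1
             exact ⟨z, by rw [show BV.Gd G v u = BV.Gd G u v from BV.gd_comm]; exact hz1, hz2⟩)
  have hst : max (a u) (a v) ≤ min (b u) (b v) := by
    apply max_le <;> apply le_min
    exacts [hab u, hg2, hg1, hab v]
  have hyne : y u ≠ y v :=
    hdisj u v hne (max (a u) (a v)) (le_max_left _ _) (le_trans hst (min_le_left _ _))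
      (le_max_right _ _) (le_trans hst (min_le_right _ _))
  rcases hyne.lt_or_gt with hyuv | hyuv
  · refine BV.core2 hab hdisj hadj' hne hyuv hst hnadj (x 0) (x 1) (x 2) (x 3)
      (nonreach 0 1 (by decide)) (nonreach 0 2 (by decide)) (nonreach 0 3 (by decide))
      (nonreach 1 2 (by decide)) (nonreach 1 3 (by decide)) (nonreach 2 3 (by decide)) ?_ ?_
    · rintro d (rfl | rfl | rfl | rfl)
      exacts [haccu 0, haccu 1, haccu 2, haccu 3]
    · rintro d (rfl | rfl | rfl | rfl)
      exacts [haccv 0, haccv 1, haccv 2, haccv 3]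
  · have hnadj' : ¬ G.Adj v u := fun h => hnadj h.symm
    have hst' : max (a v) (a u) ≤ min (b v) (b u) := by
      apply max_le <;> apply le_min
      exacts [hab v, hg1, hg2, hab u]
    have hcomm : BV.Gd G v u = BV.Gd G u v := BV.gd_comm
    have nonreach' : ∀ i j : Fin 4, i ≠ j → ¬ (BV.Gd G v u).Reachable (x i) (x j) := by
      intro i j hij; rw [hcomm]; exact nonreach i j hij
    refine BV.core2 hab hdisj hadj' hne.symm hyuv hst' hnadj' (x 0) (x 1) (x 2) (x 3)
      (nonreach' 0 1 (by decide)) (nonreach' 0 2 (by decide)) (nonreach' 0 3 (by decide))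
      (nonreach' 1 2 (by decide)) (nonreach' 1 3 (by decide)) (nonreach' 2 3 (by decide)) ?_ ?_
    · rintro d (rfl | rfl | rfl | rfl)
      · obtain ⟨z, hz1, hz2⟩ := haccv 0; exact ⟨z, by rw [hcomm]; exact hz1, hz2⟩
      · obtain ⟨z, hz1, hz2⟩ := haccv 1; exact ⟨z, by rw [hcomm]; exact hz1, hz2⟩
      · obtain ⟨z, hz1, hz2⟩ := haccv 2; exact ⟨z, by rw [hcomm]; exact hz1, hz2⟩
      · obtain ⟨z, hz1, hz2⟩ := haccv 3; exact ⟨z, by rw [hcomm]; exact hz1, hz2⟩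
    · rintro d (rfl | rfl | rfl | rfl)
      · obtain ⟨z, hz1, hz2⟩ := haccu 0; exact ⟨z, by rw [hcomm]; exact hz1, hz2⟩
      · obtain ⟨z, hz1, hz2⟩ := haccu 1; exact ⟨z, by rw [hcomm]; exact hz1, hz2⟩
      · obtain ⟨z, hz1, hz2⟩ := haccu 2; exact ⟨z, by rw [hcomm]; exact hz1, hz2⟩
      · obtain ⟨z, hz1, hz2⟩ := haccu 3; exact ⟨z, by rw [hcomm]; exact hz1, hz2⟩
end

section
/- Every graph with diameter at most 2 has edge-connectivity equal to its minimum degree (Plesník's theorem). -/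
open Finset

private lemma deg_le_cross {V : Type*} [Fintype V] [DecidableEq V] (G : SimpleGraph V)
    [DecidableRel G.Adj] (A : Set V) [DecidablePred (· ∈ A)] (a : V) (ha : a ∈ A)
    (hnb : ∀ x ∈ A, ∃ y, y ∉ A ∧ G.Adj x y) :
    G.degree a ≤ (Finset.univ.filter
      (fun p : V × V => p.1 ∈ A ∧ p.2 ∉ A ∧ G.Adj p.1 p.2)).card := by
  classical
  have hnb' : ∀ x : V, ∃ y, x ∈ A → (y ∉ A ∧ G.Adj x y) := by
    intro x
    by_cases hx : x ∈ A
    · obtain ⟨y, hy⟩ := hnb x hx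
      exact ⟨y, fun _ => hy⟩
    · exact ⟨a, fun h => absurd h hx⟩
  choose g hg using hnb'
  rw [← G.card_neighborFinset_eq_degree a]
  apply Finset.card_le_card_of_injOn (fun x => if x ∈ A then (x, g x) else (a, x))
  · intro x hx
    rw [Finset.mem_coe, SimpleGraph.mem_neighborFinset] at hx
    dsimp only
    by_cases hxA : x ∈ A
    · rw [if_pos hxA, Finset.mem_coe, Finset.mem_filter]
      exact ⟨Finset.mem_univ _, hxA, (hg x hxA).1, (hg x hxA).2⟩
    · rw [if_neg hxA, Finset.mem_coe, Finset.mem_filter]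
      exact ⟨Finset.mem_univ _, ha, hxA, hx⟩
  · intro x hx y hy hxy
    rw [Finset.mem_coe, SimpleGraph.mem_neighborFinset] at hx hy
    dsimp only at hxy
    by_cases hxA : x ∈ A <;> by_cases hyA : y ∈ A
    · rw [if_pos hxA, if_pos hyA, Prod.mk.injEq] at hxy
      exact hxy.1
    · rw [if_pos hxA, if_neg hyA, Prod.mk.injEq] at hxy
      exact absurd hxy.1.symm (G.ne_of_adj hx)
    · rw [if_neg hxA, if_pos hyA, Prod.mk.injEq] at hxy
      exact absurd hxy.1 (G.ne_of_adj hy)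
    · rw [if_neg hxA, if_neg hyA, Prod.mk.injEq] at hxy
      exact hxy.2

private lemma cross_le_cut {V : Type*} [Fintype V] [DecidableEq V] (G : SimpleGraph V)
    [DecidableRel G.Adj] (A : Set V) [DecidablePred (· ∈ A)] (S : Finset (Sym2 V))
    (hS : ∀ x y, x ∈ A → y ∉ A → G.Adj x y → s(x, y) ∈ S) :
    (Finset.univ.filter
      (fun p : V × V => p.1 ∈ A ∧ p.2 ∉ A ∧ G.Adj p.1 p.2)).card ≤ S.card := by
  apply Finset.card_le_card_of_injOn (fun p => s(p.1, p.2))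
  · intro p hp
    rw [Finset.mem_coe, Finset.mem_filter] at hp
    exact hS p.1 p.2 hp.2.1 hp.2.2.1 hp.2.2.2
  · intro p hp q hq hpq
    rw [Finset.mem_coe, Finset.mem_filter] at hp hq
    rw [Sym2.eq_iff] at hpq
    rcases hpq with ⟨h1, h2⟩ | ⟨h1, h2⟩
    · exact Prod.ext h1 h2
    · exact absurd (h1 ▸ hp.2.1) hq.2.2.1

/-- Plesník's theorem: a finite graph (with at least two vertices) of diameter
at most `2` — any two distinct vertices are adjacent or have a common
neighbour — has edge-connectivity equal to its minimum degree: the least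
cardinality of a set of edges whose removal disconnects the graph equals the
minimum degree. -/
theorem edgeConnectivity_eq_minDegree_of_diam_le_two {V : Type*} [Fintype V]
    (G : SimpleGraph V) [DecidableRel G.Adj] (hV : 2 ≤ Fintype.card V)
    (hdiam : ∀ u v : V, u ≠ v → G.Adj u v ∨ ∃ w : V, G.Adj u w ∧ G.Adj w v) :
    sInf {c : ℕ | ∃ S : Finset (Sym2 V), ↑S ⊆ G.edgeSet ∧ S.card = c ∧
        ¬ (G.deleteEdges ↑S).Connected} = G.minDegree := by
  classical
  have hne : Nonempty V := Fintype.card_pos_iff.mp (by omega)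
  -- membership: deleting the edges at a minimum degree vertex disconnects
  obtain ⟨v, hv⟩ := G.exists_minimal_degree_vertex
  have hmem : G.minDegree ∈ {c : ℕ | ∃ S : Finset (Sym2 V), ↑S ⊆ G.edgeSet ∧ S.card = c ∧
      ¬ (G.deleteEdges ↑S).Connected} := by
    refine ⟨G.incidenceFinset v, ?_, ?_, ?_⟩
    · intro e he
      rw [Finset.mem_coe, SimpleGraph.mem_incidenceFinset] at he
      exact he.1
    · rw [G.card_incidenceFinset_eq_degree, hv]
    · intro hcon
      obtain ⟨u, hu⟩ := Fintype.exists_ne_of_one_lt_card (by omega) v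
      obtain ⟨p⟩ := hcon.preconnected v u
      cases p with
      | nil => exact hu rfl
      | cons h q =>
        rw [SimpleGraph.deleteEdges_adj] at h
        exact h.2 (by rw [Finset.mem_coe, SimpleGraph.mem_incidenceFinset]
                      exact ⟨G.mem_edgeSet.mpr h.1, Sym2.mem_mk_left _ _⟩)
  refine le_antisymm (Nat.sInf_le hmem) (le_csInf ⟨_, hmem⟩ ?_)
  rintro c ⟨S, hSsub, rfl, hdisc⟩
  -- lower bound: any disconnecting edge set has at least minDegree edges
  set G' := G.deleteEdges ↑S with hG'
  have hpre : ¬ G'.Preconnected := fun h => hdisc ⟨h⟩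
  rw [SimpleGraph.Preconnected] at hpre
  push_neg at hpre
  obtain ⟨a, b, hab⟩ := hpre
  set A : Set V := {x | G'.Reachable a x} with hA
  have haA : a ∈ A := SimpleGraph.Reachable.refl a
  have hbA : b ∉ A := hab
  have hSA : ∀ x y, x ∈ A → y ∉ A → G.Adj x y → s(x, y) ∈ S := by
    intro x y hx hy hadj
    by_contra hmem'
    exact hy (hx.trans ⟨SimpleGraph.Walk.cons
      (by rw [hG', SimpleGraph.deleteEdges_adj]; exact ⟨hadj, hmem'⟩) SimpleGraph.Walk.nil⟩)
  by_cases hc : ∀ x ∈ A, ∃ y, y ∉ A ∧ G.Adj x y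
  · calc G.minDegree ≤ G.degree a := G.minDegree_le_degree a
      _ ≤ _ := deg_le_cross G A a haA hc
      _ ≤ S.card := cross_le_cut G A S hSA
  · push_neg at hc
    obtain ⟨x, hxA, hx⟩ := hc
    have hc2 : ∀ y ∈ Aᶜ, ∃ z, z ∉ Aᶜ ∧ G.Adj y z := by
      intro y hy
      have hxy : x ≠ y := fun h => hy (h ▸ hxA)
      rcases hdiam x y hxy with hadj | ⟨w, hw1, hw2⟩
      · exact absurd hadj (hx y hy)
      · by_cases hwA : w ∈ A
        · exact ⟨w, by simpa using hwA, hw2.symm⟩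
        · exact absurd hw1 (hx w hwA)
    have hSA2 : ∀ y z, y ∈ Aᶜ → z ∉ Aᶜ → G.Adj y z → s(y, z) ∈ S := by
      intro y z hy hz hadj
      have hzA : z ∈ A := by simpa using hz
      have := hSA z y hzA hy hadj.symm
      rwa [Sym2.eq_swap] at this
    calc G.minDegree ≤ G.degree b := G.minDegree_le_degree b
      _ ≤ _ := deg_le_cross G Aᶜ b hbA hc2
      _ ≤ S.card := cross_le_cut G Aᶜ S hSA2
end
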